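/- arXiv:2211.04010 — 12 statements merged into one kernel-verified Lean document; each statement's English description precedes it below -/
import Mathlib

section
/- For every real number u with 0 < u and every real number x with 0 < x < 1/u, one has sqrt(1 + γ_x) = 1 + γ_{ᾱx}, where ᾱ = ᾱ(x) = (1 - sqrt(1 - xu))/(xu). (Here γ_y := yu/(1 - yu) for real y with 0 ≤ y < 1/u.) -/
/-- Fix a unit roundoff `u > 0` and define `γ y := y*u/(1 - y*u)`.
For `0 < x < 1/u`, `sqrt (1 + γ x) = 1 + γ (ᾱ * x)` with
`ᾱ = (1 - sqrt (1 - x*u)) / (x*u)`. -/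
theorem sqrt_one_add_gamma (u x : ℝ) (hu : 0 < u) (hx : 0 < x) (hx' : x < 1 / u) :
    Real.sqrt (1 + x * u / (1 - x * u)) =
      1 + ((1 - Real.sqrt (1 - x * u)) / (x * u) * x) * u /
        (1 - ((1 - Real.sqrt (1 - x * u)) / (x * u) * x) * u) := by
  set t := x * u with ht
  have ht0 : 0 < t := mul_pos hx hu
  have ht1 : t < 1 := by
    rw [ht]
    calc x * u < (1 / u) * u := by exact mul_lt_mul_of_pos_right hx' hu
    _ = 1 := by field_simp
  set s := Real.sqrt (1 - t) with hs
  have hs0 : 0 < s := Real.sqrt_pos.mpr (by linarith)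
  have hs2 : s ^ 2 = 1 - t := Real.sq_sqrt (by linarith)
  have hs1 : s < 1 := by
    nlinarith [hs2]
  have key : (1 - s) / t * x * u = 1 - s := by
    field_simp [ht]
    ring
  rw [key]
  have hL : 1 + t / (1 - t) = (1 / s) ^ 2 := by
    have h1t : (1:ℝ) - t ≠ 0 := by linarith
    rw [div_pow, one_pow, hs2]
    field_simp
    ring
  rw [hL, Real.sqrt_sq (by positivity)]
  rw [eq_comm]
  field_simp
  have hs' : (1:ℝ) - (1 - s) = s := by ring
  rw [hs']
  field_simp <;> ring
end

section
/- For every real number u with 0 < u and every real number x with 0 < x < 1/(2u), one has sqrt(1 - γ_x) = 1 - γ_{αx}, where α = α(x) = (1 - sqrt(1 - xu(3 - 2xu)))/(xu(3 - 2xu)). (Here γ_y := yu/(1 - yu) for real y with 0 ≤ y < 1/u.) -/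
/-- Fix a unit roundoff `u > 0` and define `γ y := y*u/(1 - y*u)`.
For `0 < x < 1/(2u)`, `sqrt (1 - γ x) = 1 - γ (α * x)` with
`α = (1 - sqrt (1 - x*u*(3 - 2*x*u))) / (x*u*(3 - 2*x*u))`. -/
theorem sqrt_one_sub_gamma (u x : ℝ) (hu : 0 < u) (hx : 0 < x) (hx' : x < 1 / (2 * u)) :
    Real.sqrt (1 - x * u / (1 - x * u)) =
      1 - ((1 - Real.sqrt (1 - x * u * (3 - 2 * (x * u)))) / (x * u * (3 - 2 * (x * u))) * x) * u /
        (1 - ((1 - Real.sqrt (1 - x * u * (3 - 2 * (x * u)))) / (x * u * (3 - 2 * (x * u))) * x) * u) := by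
  set t := x * u with htdef
  have ht0 : 0 < t := mul_pos hx hu
  have ht2 : t < 1 / 2 := by
    have h2u : 0 < 2 * u := by linarith
    have h := (lt_div_iff₀ h2u).mp hx'
    nlinarith
  have h1t : 0 < 1 - t := by linarith
  have h12t : 0 < 1 - 2 * t := by linarith
  have h32t : 0 < 3 - 2 * t := by linarith
  set q := Real.sqrt (1 - t * (3 - 2 * t)) with hqdef
  have hq2 : q ^ 2 = 1 - t * (3 - 2 * t) := by
    rw [hqdef, Real.sq_sqrt]; nlinarith
  have hqpos : 0 < q := by
    rw [hqdef]; apply Real.sqrt_pos.mpr; nlinarith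
  have hq1 : q < 1 := by nlinarith
  have hlhs : 1 - t / (1 - t) = (q / (1 - t)) ^ 2 := by
    field_simp
    nlinarith [hq2]
  rw [hlhs, Real.sqrt_sq (le_of_lt (div_pos hqpos h1t))]
  -- w = (1 - q)/(3 - 2t)
  have hw : ((1 - q) / (t * (3 - 2 * t)) * x) * u = (1 - q) / (3 - 2 * t) := by
    field_simp
    ring
  rw [hw]
  have hden : (1 : ℝ) - (1 - q) / (3 - 2 * t) ≠ 0 := by
    rw [sub_ne_zero]
    intro h
    have : (1 - q) = 3 - 2 * t := by
      field_simp at h; linarith [h]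
    nlinarith
  have hd2 : 3 - 2 * t - (1 - q) ≠ 0 := by nlinarith
  have key : (1 - q) / (3 - 2 * t) / (1 - (1 - q) / (3 - 2 * t)) = (1 - q) / (3 - 2 * t - (1 - q)) := by
    rw [one_sub_div h32t.ne', div_div_div_cancel_right₀ h32t.ne']
  rw [key, eq_sub_iff_add_eq, div_add_div _ _ h1t.ne' hd2, div_eq_one_iff_eq (mul_ne_zero h1t.ne' hd2)]
  nlinarith [hq2]
end

section
/- For every real number u with 0 < u and every real number x with 0 < x < 1/(2u), the quantity α(x) = (1 - sqrt(1 - xu(3 - 2xu)))/(xu(3 - 2xu)) satisfies 1/2 < α(x) < 1. -/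
/-- For `u > 0` and `0 < x < 1/(2u)`, the constant
`α(x) = (1 - sqrt (1 - x*u*(3 - 2*x*u))) / (x*u*(3 - 2*x*u))` satisfies `1/2 < α(x) < 1`. -/
theorem alpha_mem_Ioo (u x : ℝ) (hu : 0 < u) (hx : 0 < x) (hx' : x < 1 / (2 * u)) :
    1 / 2 < (1 - Real.sqrt (1 - x * u * (3 - 2 * (x * u)))) / (x * u * (3 - 2 * (x * u))) ∧
    (1 - Real.sqrt (1 - x * u * (3 - 2 * (x * u)))) / (x * u * (3 - 2 * (x * u))) < 1 := by
  set t := x * u with htdef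
  have ht0 : 0 < t := mul_pos hx hu
  have ht1 : t < 1 / 2 := by
    have h2u : 0 < 2 * u := by linarith
    rw [lt_div_iff₀ h2u] at hx'
    nlinarith [hx']
  have hs0 : 0 < t * (3 - 2 * t) := by nlinarith
  have hs1 : t * (3 - 2 * t) < 1 := by nlinarith
  set r := Real.sqrt (1 - t * (3 - 2 * t)) with hrdef
  have hr0 : 0 ≤ r := Real.sqrt_nonneg _
  have hrsq : r ^ 2 = 1 - t * (3 - 2 * t) := Real.sq_sqrt (by linarith)
  have hr1 : r < 1 := by
    nlinarith [hrsq]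
  have hrpos : 0 < r := Real.sqrt_pos.mpr (by linarith)
  have key : (1 - r) / (t * (3 - 2 * t)) = 1 / (1 + r) := by
    rw [div_eq_div_iff (ne_of_gt hs0) (by positivity)]
    nlinarith [hrsq]
  rw [key]
  constructor
  · rw [div_lt_div_iff₀ (by norm_num) (by positivity)]
    linarith
  · rw [div_lt_one (by positivity)]
    linarith
end

section
/- Let u > 0, let n ≥ 1 be a natural number with nu ≤ 1/2, let δ_1, …, δ_n be real numbers with |δ_i| ≤ u, and let ρ_1, …, ρ_n ∈ {+1, -1}. Define θ by 1 + θ = sqrt(∏_{i=1}^n (1 + δ_i)^{ρ_i}). Then |θ| ≤ γ_{α(n)·n}, where α(n) = (1 - sqrt(1 - nu(3 - 2nu)))/(nu(3 - 2nu)) and γ_y := yu/(1 - yu). -/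
set_option maxHeartbeats 1000000


/-- Let `u > 0`, `n ≥ 1` with `n*u ≤ 1/2`, `|δ i| ≤ u` and `ρ i = ±1`.
If `1 + θ = sqrt (∏ i, (1 + δ i) ^ ρ i)`, then `|θ| ≤ γ (α n * n)`, where
`α n = (1 - sqrt (1 - n*u*(3 - 2*n*u))) / (n*u*(3 - 2*n*u))` and `γ y = y*u/(1 - y*u)`. -/
theorem abs_theta_le_gamma_alpha_n (u : ℝ) (hu : 0 < u) (n : ℕ) (hn : 1 ≤ n)
    (hnu : (n : ℝ) * u ≤ 1 / 2)
    (δ : Fin n → ℝ) (hδ : ∀ i, |δ i| ≤ u)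
    (ρ : Fin n → ℤ) (hρ : ∀ i, ρ i = 1 ∨ ρ i = -1)
    (θ : ℝ) (hθ : 1 + θ = Real.sqrt (∏ i, (1 + δ i) ^ ρ i)) :
    |θ| ≤ ((1 - Real.sqrt (1 - (n : ℝ) * u * (3 - 2 * ((n : ℝ) * u)))) /
              ((n : ℝ) * u * (3 - 2 * ((n : ℝ) * u))) * n) * u /
          (1 - ((1 - Real.sqrt (1 - (n : ℝ) * u * (3 - 2 * ((n : ℝ) * u)))) /
              ((n : ℝ) * u * (3 - 2 * ((n : ℝ) * u))) * n) * u) := by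
  have hn1 : (1 : ℝ) ≤ (n : ℝ) := by exact_mod_cast hn
  set x : ℝ := (n : ℝ) * u with hx
  have hx0 : 0 < x := by positivity
  have hxh : x ≤ 1 / 2 := hnu
  have hux : u ≤ x := by nlinarith
  have hu2 : u ≤ 1 / 2 := le_trans hux hxh
  have h1u : 0 < 1 - u := by linarith
  set c : ℝ := x * (3 - 2 * x) with hc
  have hc0 : 0 < c := by nlinarith
  have hc1 : c ≤ 1 := by nlinarith
  set s : ℝ := Real.sqrt (1 - c) with hs
  have hs0 : 0 ≤ s := Real.sqrt_nonneg _
  have hs2 : s ^ 2 = 1 - c := Real.sq_sqrt (by linarith)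
  have hs1 : s ≤ 1 := by nlinarith
  set a : ℝ := (1 - s) / c with ha
  have ha0 : 0 ≤ a := div_nonneg (by linarith) hc0.le
  have hac : a * c = 1 - s := div_mul_cancel₀ _ hc0.ne'
  have hsv : s = 1 - a * c := by linarith
  have h0 : a ^ 2 * c ^ 2 - 2 * (a * c) + c = 0 := by
    linear_combination hs2 - (s + 1 - a * c) * hsv
  have hkey : a ^ 2 * c = 2 * a - 1 := by
    have h2 : c * (a ^ 2 * c - 2 * a + 1) = c * 0 := by linear_combination h0
    have := mul_left_cancel₀ hc0.ne' h2
    linarith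
  set t : ℝ := a * x with ht
  have ht0 : 0 ≤ t := mul_nonneg ha0 hx0.le
  have hth : t ≤ 1 / 2 := by
    have h1 : t * (3 - 2 * x) = 1 - s := by linear_combination hac - a * hc
    linarith [h1, hs0, mul_nonneg ht0 (show (0:ℝ) ≤ 1 - 2*x by linarith)]
  have h1t : 0 < 1 - t := by linarith
  -- (1 - t)^2 ≤ 1 - x
  have hk2 : t ^ 2 * (3 - 2 * x) = 2 * t - x := by
    linear_combination ((3 - 2*x) * (t + a*x)) * ht - 2 * ht - a^2 * x * hc + x * hkey
  have hmain : (1 - t) ^ 2 ≤ 1 - x := by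
    nlinarith [hk2, mul_nonneg (sq_nonneg t) (show (0:ℝ) ≤ 2 - 2*x by linarith)]
  -- Bernoulli : 1 - x ≤ (1-u)^n
  have hbern : 1 - x ≤ (1 - u) ^ n := by
    have := one_add_mul_le_pow (a := -u) (by linarith) n
    calc 1 - x = 1 + (n : ℝ) * (-u) := by rw [hx]; ring
    _ ≤ (1 + -u) ^ n := this
    _ = (1 - u) ^ n := by ring_nf
  -- product bounds
  have hfac : ∀ i, (1 - u) ≤ (1 + δ i) ^ (ρ i) ∧ (1 + δ i) ^ (ρ i) ≤ (1 - u)⁻¹ := by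
    intro i
    have h1 := abs_le.mp (hδ i)
    have hpos : 0 < 1 + δ i := by linarith
    rcases hρ i with h | h <;> rw [h]
    · rw [zpow_one]
      constructor
      · linarith
      · rw [inv_eq_one_div, le_div_iff₀ h1u]; nlinarith
    · rw [zpow_neg, zpow_one]
      constructor
      · rw [inv_eq_one_div, le_div_iff₀ hpos]; nlinarith
      · exact inv_anti₀ h1u (by linarith)
  have hPlow : (1 - u) ^ n ≤ ∏ i, (1 + δ i) ^ (ρ i) := by
    calc (1 - u) ^ n = ∏ _i : Fin n, (1 - u) := by simp
    _ ≤ _ := Finset.prod_le_prod (fun i _ => h1u.le) (fun i _ => (hfac i).1)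
  have hPhigh : ∏ i, (1 + δ i) ^ (ρ i) ≤ ((1 - u)⁻¹) ^ n := by
    calc ∏ i, (1 + δ i) ^ (ρ i) ≤ ∏ _i : Fin n, (1 - u)⁻¹ :=
          Finset.prod_le_prod (fun i _ => le_trans h1u.le (hfac i).1) (fun i _ => (hfac i).2)
    _ = ((1 - u)⁻¹) ^ n := by simp
  -- sqrt bounds
  have hlow2 : (1 - t) ^ 2 ≤ ∏ i, (1 + δ i) ^ (ρ i) := le_trans hmain (le_trans hbern hPlow)
  have hθlow : 1 - t ≤ 1 + θ := by
    rw [hθ]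
    calc 1 - t = Real.sqrt ((1 - t) ^ 2) := (Real.sqrt_sq h1t.le).symm
    _ ≤ _ := Real.sqrt_le_sqrt hlow2
  have hθhigh : 1 + θ ≤ (1 - t)⁻¹ := by
    rw [hθ]
    have hle : ∏ i, (1 + δ i) ^ (ρ i) ≤ ((1 - t) ^ 2)⁻¹ := by
      calc ∏ i, (1 + δ i) ^ (ρ i) ≤ ((1 - u)⁻¹) ^ n := hPhigh
      _ = ((1 - u) ^ n)⁻¹ := by rw [inv_pow]
      _ ≤ ((1 - t) ^ 2)⁻¹ := by
          apply inv_anti₀ (by positivity) (le_trans hmain hbern)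
    calc Real.sqrt (∏ i, (1 + δ i) ^ (ρ i)) ≤ Real.sqrt (((1 - t) ^ 2)⁻¹) :=
          Real.sqrt_le_sqrt hle
    _ = (1 - t)⁻¹ := by rw [Real.sqrt_inv, Real.sqrt_sq h1t.le]
  -- conclude
  have hgoal : (1 - s) / c * (n : ℝ) * u = t := by
    rw [ht, ha, hx]; ring
  rw [hgoal]
  rw [abs_le]
  have hdiv : t / (1 - t) = (1 - t)⁻¹ - 1 := by field_simp; ring
  have htt : t ≤ t / (1 - t) := by rw [le_div_iff₀ h1t]; nlinarith
  constructor
  · linarith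
  · linarith
end

section
/- Let u > 0, let n ≥ 1 be a natural number with nu < 1/2, let δ_1, …, δ_n be real numbers with |δ_i| ≤ u, and let ρ_1, …, ρ_n ∈ {+1, -1}. Then 0 < 1 - γ_n ≤ sqrt(1 - γ_n) ≤ sqrt(∏_{i=1}^n (1 + δ_i)^{ρ_i}) ≤ sqrt(1 + γ_n) ≤ 1 + γ_n, where γ_n := nu/(1 - nu). -/
/-- Let `u > 0`, `n ≥ 1` with `n*u < 1/2`, `|δ i| ≤ u` and `ρ i = ±1`.  With
`γ n = n*u/(1 - n*u)`, one has
`0 < 1 - γ n ≤ sqrt (1 - γ n) ≤ sqrt (∏ i, (1 + δ i) ^ ρ i) ≤ sqrt (1 + γ n) ≤ 1 + γ n`. -/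
theorem sqrt_prod_bounds (u : ℝ) (hu : 0 < u) (n : ℕ) (hn : 1 ≤ n)
    (hnu : (n : ℝ) * u < 1 / 2)
    (δ : Fin n → ℝ) (hδ : ∀ i, |δ i| ≤ u)
    (ρ : Fin n → ℤ) (hρ : ∀ i, ρ i = 1 ∨ ρ i = -1) :
    0 < 1 - (n : ℝ) * u / (1 - (n : ℝ) * u) ∧
    1 - (n : ℝ) * u / (1 - (n : ℝ) * u) ≤ Real.sqrt (1 - (n : ℝ) * u / (1 - (n : ℝ) * u)) ∧
    Real.sqrt (1 - (n : ℝ) * u / (1 - (n : ℝ) * u)) ≤ Real.sqrt (∏ i, (1 + δ i) ^ ρ i) ∧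
    Real.sqrt (∏ i, (1 + δ i) ^ ρ i) ≤ Real.sqrt (1 + (n : ℝ) * u / (1 - (n : ℝ) * u)) ∧
    Real.sqrt (1 + (n : ℝ) * u / (1 - (n : ℝ) * u)) ≤ 1 + (n : ℝ) * u / (1 - (n : ℝ) * u) := by
  set a : ℝ := (n : ℝ) * u with ha_def
  have hn1 : (1 : ℝ) ≤ (n : ℝ) := by exact_mod_cast hn
  have ha0 : 0 < a := by positivity
  have hu2 : u < 1 / 2 := lt_of_le_of_lt (le_mul_of_one_le_left hu.le hn1) hnu
  have hu1 : u < 1 := by linarith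
  have h1u : 0 < 1 - u := by linarith
  have h1a : (0:ℝ) < 1 - a := by linarith
  set γ : ℝ := a / (1 - a) with hγ_def
  have hγ0 : 0 < γ := div_pos ha0 h1a
  have hγ1 : γ < 1 := by
    rw [div_lt_one h1a]; linarith
  have haγ : a ≤ γ := by
    rw [le_div_iff₀ h1a]; nlinarith
  -- each factor bounds
  have hfac : ∀ i, 1 - u ≤ (1 + δ i) ^ ρ i ∧ (1 + δ i) ^ ρ i ≤ (1 - u)⁻¹ := by
    intro i
    have h1 := abs_le.1 (hδ i)
    have hpos : 0 < 1 + δ i := by linarith [h1.1]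
    have hle : 1 + δ i ≤ 1 + u := by linarith [h1.2]
    have hge : 1 - u ≤ 1 + δ i := by linarith [h1.1]
    have key1 : 1 + u ≤ (1 - u)⁻¹ := by
      nlinarith [mul_inv_cancel₀ (ne_of_gt h1u), inv_pos.mpr h1u]
    rcases hρ i with h | h
    · rw [h, zpow_one]
      exact ⟨hge, hle.trans key1⟩
    · rw [h, zpow_neg_one]
      constructor
      · have : (1 + u)⁻¹ ≤ (1 + δ i)⁻¹ := by
          apply one_div_le_one_div_of_le hpos hle |>.trans_eq (one_div _) |>.trans_eq' (one_div _)
        refine le_trans ?_ this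
        nlinarith [mul_inv_cancel₀ (show (1:ℝ) + u ≠ 0 by linarith), inv_pos.mpr (show (0:ℝ) < 1 + u by linarith)]
      · have := one_div_le_one_div_of_le h1u hge
        simpa [one_div] using this
  have hprod_lb : (1 - u) ^ n ≤ ∏ i, (1 + δ i) ^ ρ i := by
    calc (1 - u) ^ n = ∏ _i : Fin n, (1 - u) := by simp
    _ ≤ ∏ i, (1 + δ i) ^ ρ i :=
      Finset.prod_le_prod (fun i _ => by linarith) (fun i _ => (hfac i).1)
  have hprod_ub : ∏ i, (1 + δ i) ^ ρ i ≤ ((1 - u) ^ n)⁻¹ := by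
    calc ∏ i, (1 + δ i) ^ ρ i ≤ ∏ _i : Fin n, (1 - u)⁻¹ :=
        Finset.prod_le_prod (fun i _ => le_trans (by linarith) (hfac i).1) (fun i _ => (hfac i).2)
    _ = ((1 - u) ^ n)⁻¹ := by simp [inv_pow]
  have hbern : 1 - a ≤ (1 - u) ^ n := by
    have := one_add_mul_le_pow (a := -u) (by linarith) n
    have h' : (1:ℝ) + (n:ℝ) * -u ≤ (1 + -u) ^ n := this
    rw [← sub_eq_add_neg] at h'
    rw [ha_def]; linarith
  have hP_lb : 1 - γ ≤ ∏ i, (1 + δ i) ^ ρ i := by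
    have : 1 - γ ≤ 1 - a := by linarith
    linarith [hbern, hprod_lb]
  have hP_ub : ∏ i, (1 + δ i) ^ ρ i ≤ 1 + γ := by
    have h1 : ((1 - u) ^ n)⁻¹ ≤ (1 - a)⁻¹ := by
      apply inv_anti₀ h1a hbern
    have h2 : (1 - a)⁻¹ = 1 + γ := by
      field_simp [hγ_def]
      rw [hγ_def, mul_add, mul_div_cancel₀ _ h1a.ne']; ring
    linarith [hprod_ub]
  refine ⟨by linarith, ?_, Real.sqrt_le_sqrt hP_lb, Real.sqrt_le_sqrt hP_ub, ?_⟩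
  · rw [Real.le_sqrt (by linarith) (by linarith)]
    nlinarith
  · have h := Real.sqrt_le_sqrt (show 1 + γ ≤ (1 + γ)^2 by nlinarith)
    rwa [Real.sqrt_sq (by linarith)] at h
end

section
/- Let u > 0 and let a, b > 0 be real numbers with max(a, b)·u < 1. Let c ∈ ℝ and s ∈ ℂ satisfy c² + |s|² = 1. Let θ_a, θ_b ∈ ℝ with |θ_a| ≤ γ_a and |θ_b| ≤ γ_b, and set ĉ := c(1 + θ_a) and ŝ := s(1 + θ_b). Then σ := sqrt(ĉ² + |ŝ|²) satisfies |σ - 1| ≤ γ_m, where m := max(a, b) and γ_y := yu/(1 - yu). -/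
lemma aux_up (g c2 s2 x y : ℝ) (hg : 0 ≤ g) (hc : 0 ≤ c2) (hs : 0 ≤ s2)
    (hsum : c2 + s2 = 1) (hx1 : -g ≤ x) (hx2 : x ≤ g) (hy1 : -g ≤ y) (hy2 : y ≤ g) :
    c2 * (1 + x) ^ 2 + s2 * (1 + y) ^ 2 ≤ (1 + g) ^ 2 := by
  have k3 : c2 * (1 + x) ^ 2 ≤ c2 * (1 + g) ^ 2 := by
    nlinarith [mul_nonneg (mul_nonneg hc (by linarith : (0:ℝ) ≤ g - x)) (by linarith : (0:ℝ) ≤ 2 + g + x)]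
  have k4 : s2 * (1 + y) ^ 2 ≤ s2 * (1 + g) ^ 2 := by
    nlinarith [mul_nonneg (mul_nonneg hs (by linarith : (0:ℝ) ≤ g - y)) (by linarith : (0:ℝ) ≤ 2 + g + y)]
  have hh : c2 * (1 + g) ^ 2 + s2 * (1 + g) ^ 2 = (1 + g) ^ 2 := by
    linear_combination (1 + g) ^ 2 * hsum
  linarith

lemma aux_lo (g c2 s2 x y : ℝ) (hg : 0 ≤ g) (hg1 : g ≤ 1) (hc : 0 ≤ c2) (hs : 0 ≤ s2)
    (hsum : c2 + s2 = 1) (hx1 : -g ≤ x) (hx2 : x ≤ g) (hy1 : -g ≤ y) (hy2 : y ≤ g) :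
    (1 - g) ^ 2 ≤ c2 * (1 + x) ^ 2 + s2 * (1 + y) ^ 2 := by
  have k3 : c2 * (1 - g) ^ 2 ≤ c2 * (1 + x) ^ 2 := by
    nlinarith [mul_nonneg (mul_nonneg hc (by linarith : (0:ℝ) ≤ g + x)) (by linarith : (0:ℝ) ≤ 2 - g + x)]
  have k4 : s2 * (1 - g) ^ 2 ≤ s2 * (1 + y) ^ 2 := by
    nlinarith [mul_nonneg (mul_nonneg hs (by linarith : (0:ℝ) ≤ g + y)) (by linarith : (0:ℝ) ≤ 2 - g + y)]
  have hh : c2 * (1 - g) ^ 2 + s2 * (1 - g) ^ 2 = (1 - g) ^ 2 := by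
    linear_combination (1 - g) ^ 2 * hsum
  linarith

/-- If `c² + |s|² = 1`, `ĉ = c(1 + θ_a)`, `ŝ = s(1 + θ_b)` with `|θ_a| ≤ γ a`,
`|θ_b| ≤ γ b`, then `σ = sqrt (ĉ² + |ŝ|²)` satisfies `|σ - 1| ≤ γ (max a b)`,
where `γ y = y*u/(1 - y*u)`. -/
theorem sigma_near_one (u a b : ℝ) (hu : 0 < u) (ha : 0 < a) (hb : 0 < b)
    (hab : max a b * u < 1)
    (c : ℝ) (s : ℂ) (hcs : c ^ 2 + ‖s‖ ^ 2 = 1)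
    (θa θb : ℝ) (hθa : |θa| ≤ a * u / (1 - a * u)) (hθb : |θb| ≤ b * u / (1 - b * u)) :
    |Real.sqrt ((c * (1 + θa)) ^ 2 + ‖s * ((1 + θb : ℝ) : ℂ)‖ ^ 2) - 1| ≤
      max a b * u / (1 - max a b * u) := by
  have ham : a ≤ max a b := le_max_left a b
  have hbm : b ≤ max a b := le_max_right a b
  have h1 : 0 < 1 - max a b * u := by linarith
  set g := max a b * u / (1 - max a b * u) with hg
  have hg0 : 0 ≤ g := div_nonneg (by positivity) h1.le
  have h2a : 0 < 1 - a * u := by nlinarith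
  have h2b : 0 < 1 - b * u := by nlinarith
  have hga : a * u / (1 - a * u) ≤ g := by
    rw [hg, div_le_div_iff₀ h2a h1]; nlinarith
  have hgb : b * u / (1 - b * u) ≤ g := by
    rw [hg, div_le_div_iff₀ h2b h1]; nlinarith
  obtain ⟨ha1, ha2⟩ := abs_le.mp (hθa.trans hga)
  obtain ⟨hb1, hb2⟩ := abs_le.mp (hθb.trans hgb)
  have habs : (c * (1 + θa)) ^ 2 + ‖s * ((1 + θb : ℝ) : ℂ)‖ ^ 2
      = c ^ 2 * (1 + θa) ^ 2 + ‖s‖ ^ 2 * (1 + θb) ^ 2 := by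
    simp only [norm_mul, Complex.norm_real, Real.norm_eq_abs, mul_pow, sq_abs]
  rw [habs]
  clear_value g
  clear hg hθa hθb hga hgb hab h1 ham hbm h2a h2b
  have hc2 : 0 ≤ c ^ 2 := sq_nonneg c
  have hs2 : 0 ≤ ‖s‖ ^ 2 := sq_nonneg _
  have hup : c ^ 2 * (1 + θa) ^ 2 + ‖s‖ ^ 2 * (1 + θb) ^ 2 ≤ (1 + g) ^ 2 :=
    aux_up g _ _ θa θb hg0 hc2 hs2 hcs ha1 ha2 hb1 hb2
  have hsq_up : Real.sqrt (c ^ 2 * (1 + θa) ^ 2 + ‖s‖ ^ 2 * (1 + θb) ^ 2)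
      ≤ 1 + g := by
    calc Real.sqrt _ ≤ Real.sqrt ((1 + g) ^ 2) := Real.sqrt_le_sqrt hup
      _ = 1 + g := Real.sqrt_sq (by linarith)
  have hsq_lo : 1 - g ≤ Real.sqrt (c ^ 2 * (1 + θa) ^ 2 + ‖s‖ ^ 2 * (1 + θb) ^ 2) := by
    rcases le_or_gt g 1 with hgle | hgt
    · have klo := aux_lo g _ _ θa θb hg0 hgle hc2 hs2 hcs ha1 ha2 hb1 hb2
      calc (1 - g) = Real.sqrt ((1 - g) ^ 2) := (Real.sqrt_sq (by linarith)).symm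
        _ ≤ Real.sqrt _ := Real.sqrt_le_sqrt klo
    · have := Real.sqrt_nonneg (c ^ 2 * (1 + θa) ^ 2 + ‖s‖ ^ 2 * (1 + θb) ^ 2)
      linarith
  rw [abs_le]
  constructor <;> linarith
end

section
/- Let u > 0 and a, b, d > 0 be real numbers with (a + d)u < 1 and (b + d)u < 1. Let f, g ∈ ℂ with f ≠ 0, and let c := |f|/h, s := (f/|f|)·conj(g)/h, r := (f/|f|)·h with h := sqrt(|f|² + |g|²) be the exact Givens rotation data for (f, g). Suppose ĉ = c(1 + θ_a), ŝ = s(1 + θ_b), r̂ = r(1 + θ_d) with real θ_a, θ_b, θ_d satisfying |θ_a| ≤ γ_a, |θ_b| ≤ γ_b, |θ_d| ≤ γ_d. Then |ĉ·r̂ - f| ≤ γ_{a+d}·|f| and |conj(ŝ)·r̂ - g| ≤ γ_{b+d}·|g|; i.e., the backward error of the computed rotation applied as Q̂^H(r̂, 0)^T relative to (f, g)^T is bounded componentwise by γ_{a+d} and γ_{b+d}. -/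
lemma gamma_aux (u a d : ℝ) (hu : 0 < u) (ha : 0 < a) (hd : 0 < d)
    (had : (a + d) * u < 1) (θa θd : ℝ)
    (hθa : |θa| ≤ a * u / (1 - a * u)) (hθd : |θd| ≤ d * u / (1 - d * u)) :
    |(1 + θa) * (1 + θd) - 1| ≤ (a + d) * u / (1 - (a + d) * u) := by
  have hau : a * u < 1 := by nlinarith
  have hdu : d * u < 1 := by nlinarith
  have h1 : (0:ℝ) < 1 - a * u := by linarith
  have h2 : (0:ℝ) < 1 - d * u := by linarith
  have h3 : (0:ℝ) < 1 - (a + d) * u := by linarith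
  have hγa : (0:ℝ) ≤ a * u / (1 - a * u) := by positivity
  have hγd : (0:ℝ) ≤ d * u / (1 - d * u) := by positivity
  have key : (1 + θa) * (1 + θd) - 1 = θa + θd + θa * θd := by ring
  rw [key]
  have h4 : |θa + θd + θa * θd| ≤ |θa| + |θd| + |θa| * |θd| := by
    calc |θa + θd + θa * θd| ≤ |θa + θd| + |θa * θd| := abs_add_le _ _
    _ ≤ |θa| + |θd| + |θa| * |θd| := by
        rw [abs_mul]; exact add_le_add (abs_add_le _ _) le_rfl
  have h5 : |θa| + |θd| + |θa| * |θd| ≤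
      a * u / (1 - a * u) + d * u / (1 - d * u) +
        (a * u / (1 - a * u)) * (d * u / (1 - d * u)) := by
    have := mul_le_mul hθa hθd (abs_nonneg _) hγa
    linarith
  have h6 : a * u / (1 - a * u) + d * u / (1 - d * u) +
      (a * u / (1 - a * u)) * (d * u / (1 - d * u)) ≤
      (a + d) * u / (1 - (a + d) * u) := by
    rw [div_add_div _ _ (ne_of_gt h1) (ne_of_gt h2), div_mul_div_comm,
      div_add_div _ _ (by positivity) (by positivity), div_le_div_iff₀ (by positivity) h3]
    nlinarith [mul_pos ha hd, sq_nonneg u, mul_pos (mul_pos ha hd) (mul_pos hu hu)]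
  linarith

/-- Backward error of a computed Givens rotation: if `ĉ = c(1 + θ_a)`, `ŝ = s(1 + θ_b)`,
`r̂ = r(1 + θ_d)` with `|θ_a| ≤ γ a`, `|θ_b| ≤ γ b`, `|θ_d| ≤ γ d`, where `c, s, r` are the
exact Givens data for `(f, g)` with `f ≠ 0`, then `|ĉ·r̂ - f| ≤ γ (a+d)·|f|` and
`|conj ŝ·r̂ - g| ≤ γ (b+d)·|g|`, where `γ y = y*u/(1 - y*u)`. -/
theorem givens_backward_error (u a b d : ℝ) (hu : 0 < u) (ha : 0 < a) (hb : 0 < b)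
    (hd : 0 < d) (had : (a + d) * u < 1) (hbd : (b + d) * u < 1)
    (f g : ℂ) (hf : f ≠ 0)
    (θa θb θd : ℝ) (hθa : |θa| ≤ a * u / (1 - a * u)) (hθb : |θb| ≤ b * u / (1 - b * u))
    (hθd : |θd| ≤ d * u / (1 - d * u)) :
    let h : ℝ := Real.sqrt (‖f‖ ^ 2 + ‖g‖ ^ 2)
    let c : ℝ := ‖f‖ / h
    let s : ℂ := f / (‖f‖ : ℂ) * (starRingEnd ℂ g) / (h : ℂ)
    let r : ℂ := f / (‖f‖ : ℂ) * (h : ℂ)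
    ‖((c * (1 + θa) : ℝ) : ℂ) * (r * ((1 + θd : ℝ) : ℂ)) - f‖ ≤
      (a + d) * u / (1 - (a + d) * u) * ‖f‖ ∧
    ‖(starRingEnd ℂ (s * ((1 + θb : ℝ) : ℂ))) * (r * ((1 + θd : ℝ) : ℂ)) - g‖ ≤
      (b + d) * u / (1 - (b + d) * u) * ‖g‖ := by
  intro h c s r
  have habs : (0:ℝ) < ‖f‖ := norm_pos_iff.mpr hf
  have hh : (0:ℝ) < h := by
    apply Real.sqrt_pos.mpr
    have : (0:ℝ) ≤ ‖g‖ ^ 2 := sq_nonneg _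
    nlinarith
  have habsC : (‖f‖ : ℂ) ≠ 0 := by exact_mod_cast ne_of_gt habs
  have hhC : (h : ℂ) ≠ 0 := by exact_mod_cast ne_of_gt hh
  have hcr : ((c : ℝ) : ℂ) * r = f := by
    show ((‖f‖ / h : ℝ) : ℂ) * (f / (‖f‖ : ℂ) * (h : ℂ)) = f
    push_cast
    field_simp
  have hsr : (starRingEnd ℂ s) * r = g := by
    show (starRingEnd ℂ (f / (‖f‖ : ℂ) * (starRingEnd ℂ g) / (h : ℂ))) *
        (f / (‖f‖ : ℂ) * (h : ℂ)) = g
    have hmc : starRingEnd ℂ f * f = ((‖f‖ : ℝ) : ℂ) ^ 2 := by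
      rw [mul_comm, Complex.mul_conj]
      norm_cast
      rw [← Complex.sq_norm]
    simp only [map_div₀, map_mul, Complex.conj_conj, Complex.conj_ofReal]
    field_simp
    ring_nf
    linear_combination g * hmc
  constructor
  · have : ((c * (1 + θa) : ℝ) : ℂ) * (r * ((1 + θd : ℝ) : ℂ)) - f =
        f * ((((1 + θa) * (1 + θd) - 1 : ℝ)) : ℂ) := by
      push_cast
      rw [← hcr]; ring
    rw [this, norm_mul, Complex.norm_real, Real.norm_eq_abs, mul_comm]
    exact mul_le_mul_of_nonneg_right
      (gamma_aux u a d hu ha hd had θa θd hθa hθd) (norm_nonneg f)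
  · have : (starRingEnd ℂ (s * ((1 + θb : ℝ) : ℂ))) * (r * ((1 + θd : ℝ) : ℂ)) - g =
        g * ((((1 + θb) * (1 + θd) - 1 : ℝ)) : ℂ) := by
      rw [map_mul, Complex.conj_ofReal, ← hsr]; push_cast; ring
    rw [this, norm_mul, Complex.norm_real, Real.norm_eq_abs, mul_comm]
    exact mul_le_mul_of_nonneg_right
      (gamma_aux u b d hu hb hd hbd θb θd hθb hθd) (norm_nonneg g)
end

section
/- Let u be a real number with 0 < u ≤ 1/24. Let f, g ∈ ℝ with (f, g) ≠ (0, 0), and let δ_1, δ_2, δ_3, δ_4, δ_5 be real numbers with |δ_i| ≤ u for all i. Define ĉ := f·(1 + δ_5) / ( sqrt((f²(1 + δ_1) + g²(1 + δ_2))·(1 + δ_3)) · (1 + δ_4) ). Then |ĉ - c| ≤ γ_4·|c|, where c := f/sqrt(f² + g²) and γ_4 := 4u/(1 - 4u). -/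
set_option maxHeartbeats 1000000 in
/-- Worst-case error of the straightforward computation of `c = f/sqrt (f² + g²)` in real
arithmetic: with rounding errors `|δ_i| ≤ u ≤ 1/24`, the computed
`ĉ = f(1 + δ_5)/(sqrt ((f²(1 + δ_1) + g²(1 + δ_2))(1 + δ_3))·(1 + δ_4))` satisfies
`|ĉ - c| ≤ γ_4·|c|`, where `γ_4 = 4u/(1 - 4u)`. -/
theorem real_givens_c_error (u : ℝ) (hu : 0 < u) (hu' : u ≤ 1 / 24)
    (f g : ℝ) (hfg : (f, g) ≠ (0, 0))
    (δ₁ δ₂ δ₃ δ₄ δ₅ : ℝ) (h₁ : |δ₁| ≤ u) (h₂ : |δ₂| ≤ u) (h₃ : |δ₃| ≤ u)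
    (h₄ : |δ₄| ≤ u) (h₅ : |δ₅| ≤ u) :
    |f * (1 + δ₅) /
        (Real.sqrt ((f ^ 2 * (1 + δ₁) + g ^ 2 * (1 + δ₂)) * (1 + δ₃)) * (1 + δ₄)) -
      f / Real.sqrt (f ^ 2 + g ^ 2)| ≤
    4 * u / (1 - 4 * u) * |f / Real.sqrt (f ^ 2 + g ^ 2)| := by
  obtain ⟨h1l, h1u⟩ := abs_le.mp h₁
  obtain ⟨h2l, h2u⟩ := abs_le.mp h₂
  obtain ⟨h3l, h3u⟩ := abs_le.mp h₃
  obtain ⟨h4l, h4u⟩ := abs_le.mp h₄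
  obtain ⟨h5l, h5u⟩ := abs_le.mp h₅
  have hu1 : (0:ℝ) < 1 - u := by linarith
  have hu4 : (0:ℝ) < 1 - 4 * u := by linarith
  have hfg' : f ≠ 0 ∨ g ≠ 0 := by
    by_contra h
    push_neg at h
    exact hfg (by simp [h.1, h.2])
  have hS : 0 < f ^ 2 + g ^ 2 := by
    rcases hfg' with h | h <;> positivity
  set s := Real.sqrt (f ^ 2 + g ^ 2) with hs_def
  have hs : 0 < s := Real.sqrt_pos.mpr hS
  set A := (f ^ 2 * (1 + δ₁) + g ^ 2 * (1 + δ₂)) * (1 + δ₃) with hA_def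
  have hA_lb : (1 - u) ^ 2 * (f ^ 2 + g ^ 2) ≤ A := by
    have hfirst : (1 - u) * (f ^ 2 + g ^ 2) ≤ f ^ 2 * (1 + δ₁) + g ^ 2 * (1 + δ₂) := by
      nlinarith [mul_nonneg (sq_nonneg f) (show (0:ℝ) ≤ δ₁ + u by linarith),
        mul_nonneg (sq_nonneg g) (show (0:ℝ) ≤ δ₂ + u by linarith)]
    have hfirst0 : 0 ≤ (1 - u) * (f ^ 2 + g ^ 2) := by positivity
    calc (1 - u) ^ 2 * (f ^ 2 + g ^ 2)
        = ((1 - u) * (f ^ 2 + g ^ 2)) * (1 - u) := by ring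
      _ ≤ (f ^ 2 * (1 + δ₁) + g ^ 2 * (1 + δ₂)) * (1 + δ₃) :=
          mul_le_mul hfirst (by linarith) hu1.le (by linarith)
  have hA_ub : A ≤ (1 + u) ^ 2 * (f ^ 2 + g ^ 2) := by
    have hfirst : f ^ 2 * (1 + δ₁) + g ^ 2 * (1 + δ₂) ≤ (1 + u) * (f ^ 2 + g ^ 2) := by
      nlinarith [mul_nonneg (sq_nonneg f) (show (0:ℝ) ≤ u - δ₁ by linarith),
        mul_nonneg (sq_nonneg g) (show (0:ℝ) ≤ u - δ₂ by linarith)]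
    have hfirst0 : 0 ≤ f ^ 2 * (1 + δ₁) + g ^ 2 * (1 + δ₂) := by
      nlinarith [mul_nonneg (sq_nonneg f) (show (0:ℝ) ≤ 1 + δ₁ by linarith),
        mul_nonneg (sq_nonneg g) (show (0:ℝ) ≤ 1 + δ₂ by linarith)]
    calc A ≤ ((1 + u) * (f ^ 2 + g ^ 2)) * (1 + u) :=
          mul_le_mul hfirst (by linarith) (by linarith) (by positivity)
      _ = (1 + u) ^ 2 * (f ^ 2 + g ^ 2) := by ring
  have hsqA_lb : (1 - u) * s ≤ Real.sqrt A := by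
    have h := Real.sqrt_le_sqrt hA_lb
    rwa [Real.sqrt_mul (show (0:ℝ) ≤ (1 - u) ^ 2 by positivity) (f ^ 2 + g ^ 2),
      Real.sqrt_sq hu1.le] at h
  have hsqA_ub : Real.sqrt A ≤ (1 + u) * s := by
    have h := Real.sqrt_le_sqrt hA_ub
    rwa [Real.sqrt_mul (show (0:ℝ) ≤ (1 + u) ^ 2 by positivity) (f ^ 2 + g ^ 2),
      Real.sqrt_sq (by linarith : (0:ℝ) ≤ 1 + u)] at h
  set B := Real.sqrt A with hB_def
  have hB0 : 0 ≤ B := Real.sqrt_nonneg A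
  clear_value B
  clear_value s
  clear hA_lb hA_ub hA_def hs_def
  clear_value A
  set D := B * (1 + δ₄) with hD_def
  have hD_lb : (1 - u) ^ 2 * s ≤ D := by
    calc (1 - u) ^ 2 * s = ((1 - u) * s) * (1 - u) := by ring
      _ ≤ B * (1 + δ₄) := mul_le_mul hsqA_lb (by linarith) hu1.le hB0
  have hD_ub : D ≤ (1 + u) ^ 2 * s := by
    calc D ≤ ((1 + u) * s) * (1 + u) :=
          mul_le_mul hsqA_ub (by linarith) (by linarith) (by positivity)
      _ = (1 + u) ^ 2 * s := by ring
  have hD_pos : 0 < D := lt_of_lt_of_le (by positivity) hD_lb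
  set k := 4 * u / (1 - 4 * u) with hk_def
  have hk_nonneg : 0 ≤ k := by positivity
  have hc3 : k * ((1 - u) ^ 2 * s) ≤ k * D := mul_le_mul_of_nonneg_left hD_lb hk_nonneg
  have hc4 : (3 * u + u ^ 2) * s ≤ k * ((1 - u) ^ 2 * s) := by
    have h' : 3 * u + u ^ 2 ≤ k * (1 - u) ^ 2 := by
      rw [hk_def, div_mul_eq_mul_div, le_div_iff₀ hu4]
      nlinarith
    calc (3 * u + u ^ 2) * s ≤ (k * (1 - u) ^ 2) * s :=
          mul_le_mul_of_nonneg_right h' hs.le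
      _ = k * ((1 - u) ^ 2 * s) := by ring
  have hc1 : s * δ₅ ≤ s * u := mul_le_mul_of_nonneg_left h5u hs.le
  have hc2 : s * (-u) ≤ s * δ₅ := mul_le_mul_of_nonneg_left h5l hs.le
  have key : |s * (1 + δ₅) - D| ≤ k * D := by
    rw [abs_le]
    constructor
    · linarith [mul_nonneg (mul_nonneg hu.le hu.le) hs.le]
    · linarith [mul_nonneg (mul_nonneg hu.le hu.le) hs.le]
  have hrw : f * (1 + δ₅) / D - f / s = f * (s * (1 + δ₅) - D) / (D * s) := by
    rw [div_sub_div _ _ hD_pos.ne' hs.ne']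
    congr 1
    ring
  rw [hrw, abs_div, abs_mul, abs_of_pos (mul_pos hD_pos hs), abs_div, abs_of_pos hs]
  calc |f| * |s * (1 + δ₅) - D| / (D * s)
      ≤ |f| * (k * D) / (D * s) := by gcongr
    _ = k * (|f| / s) := by
        rw [div_eq_iff (mul_pos hD_pos hs).ne']
        field_simp
end

section
/- Let u be a real number with 0 < u ≤ 1/24. Let f, g ∈ ℝ with (f, g) ≠ (0, 0), and let δ_1, δ_2, δ_3, δ_4 be real numbers with |δ_i| ≤ u for all i. Define r̂ := sqrt((f²(1 + δ_1) + g²(1 + δ_2))·(1 + δ_3)) · (1 + δ_4). Then |r̂ - r| ≤ γ_3·r, where r := sqrt(f² + g²) and γ_3 := 3u/(1 - 3u). -/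
set_option maxHeartbeats 1000000 in
/-- Worst-case error of the straightforward computation of `r = sqrt (f² + g²)` in real
arithmetic: with rounding errors `|δ_i| ≤ u ≤ 1/24`, the computed
`r̂ = sqrt ((f²(1 + δ_1) + g²(1 + δ_2))(1 + δ_3))·(1 + δ_4)` satisfies
`|r̂ - r| ≤ γ_3·r`, where `γ_3 = 3u/(1 - 3u)`. -/
theorem real_givens_r_error (u : ℝ) (hu : 0 < u) (hu' : u ≤ 1 / 24)
    (f g : ℝ) (hfg : (f, g) ≠ (0, 0))
    (δ₁ δ₂ δ₃ δ₄ : ℝ) (h₁ : |δ₁| ≤ u) (h₂ : |δ₂| ≤ u) (h₃ : |δ₃| ≤ u) (h₄ : |δ₄| ≤ u) :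
    |Real.sqrt ((f ^ 2 * (1 + δ₁) + g ^ 2 * (1 + δ₂)) * (1 + δ₃)) * (1 + δ₄) -
      Real.sqrt (f ^ 2 + g ^ 2)| ≤
    3 * u / (1 - 3 * u) * Real.sqrt (f ^ 2 + g ^ 2) := by
  obtain ⟨h₁l, h₁r⟩ := abs_le.mp h₁
  obtain ⟨h₂l, h₂r⟩ := abs_le.mp h₂
  obtain ⟨h₃l, h₃r⟩ := abs_le.mp h₃
  obtain ⟨h₄l, h₄r⟩ := abs_le.mp h₄
  have hApos : 0 < f ^ 2 + g ^ 2 := by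
    rcases lt_or_eq_of_le (by positivity : (0:ℝ) ≤ f ^ 2 + g ^ 2) with h | h
    · exact h
    · exfalso
      apply hfg
      have hf : f = 0 := by
        have : f ^ 2 = 0 := by nlinarith [sq_nonneg f, sq_nonneg g]
        exact pow_eq_zero_iff (by norm_num) |>.mp this
      have hg : g = 0 := by
        have : g ^ 2 = 0 := by nlinarith [sq_nonneg f, sq_nonneg g]
        exact pow_eq_zero_iff (by norm_num) |>.mp this
      simp [hf, hg]
  have hrpos : 0 < Real.sqrt (f ^ 2 + g ^ 2) := Real.sqrt_pos.mpr hApos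
  have hu1 : (0:ℝ) < 1 - u := by linarith
  have hu3 : (0:ℝ) < 1 - 3 * u := by linarith
  have e13 : (1 + δ₁) * (1 + δ₃) ≤ (1 + u) ^ 2 := by
    nlinarith [mul_nonneg (by linarith : (0:ℝ) ≤ u - δ₁) (by linarith : (0:ℝ) ≤ u + δ₃)]
  have e23 : (1 + δ₂) * (1 + δ₃) ≤ (1 + u) ^ 2 := by
    nlinarith [mul_nonneg (by linarith : (0:ℝ) ≤ u - δ₂) (by linarith : (0:ℝ) ≤ u + δ₃)]
  have l13 : (1 - u) ^ 2 ≤ (1 + δ₁) * (1 + δ₃) := by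
    nlinarith [mul_nonneg (by linarith : (0:ℝ) ≤ u + δ₁) (by linarith : (0:ℝ) ≤ u + δ₃)]
  have l23 : (1 - u) ^ 2 ≤ (1 + δ₂) * (1 + δ₃) := by
    nlinarith [mul_nonneg (by linarith : (0:ℝ) ≤ u + δ₂) (by linarith : (0:ℝ) ≤ u + δ₃)]
  have hSub : (f ^ 2 * (1 + δ₁) + g ^ 2 * (1 + δ₂)) * (1 + δ₃) ≤
      ((1 + u) * Real.sqrt (f ^ 2 + g ^ 2)) ^ 2 := by
    have heq : ((1 + u) * Real.sqrt (f ^ 2 + g ^ 2)) ^ 2 = (1 + u) ^ 2 * (f ^ 2 + g ^ 2) := by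
      rw [mul_pow, Real.sq_sqrt hApos.le]
    rw [heq]
    linarith [mul_le_mul_of_nonneg_left e13 (sq_nonneg f),
      mul_le_mul_of_nonneg_left e23 (sq_nonneg g)]
  have hSlb : ((1 - u) * Real.sqrt (f ^ 2 + g ^ 2)) ^ 2 ≤
      (f ^ 2 * (1 + δ₁) + g ^ 2 * (1 + δ₂)) * (1 + δ₃) := by
    have heq : ((1 - u) * Real.sqrt (f ^ 2 + g ^ 2)) ^ 2 = (1 - u) ^ 2 * (f ^ 2 + g ^ 2) := by
      rw [mul_pow, Real.sq_sqrt hApos.le]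
    rw [heq]
    linarith [mul_le_mul_of_nonneg_left l13 (sq_nonneg f),
      mul_le_mul_of_nonneg_left l23 (sq_nonneg g)]
  have hsub : Real.sqrt ((f ^ 2 * (1 + δ₁) + g ^ 2 * (1 + δ₂)) * (1 + δ₃)) ≤
      (1 + u) * Real.sqrt (f ^ 2 + g ^ 2) := by
    have := Real.sqrt_le_sqrt hSub
    rwa [Real.sqrt_sq (by positivity)] at this
  have hslb : (1 - u) * Real.sqrt (f ^ 2 + g ^ 2) ≤
      Real.sqrt ((f ^ 2 * (1 + δ₁) + g ^ 2 * (1 + δ₂)) * (1 + δ₃)) := by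
    have := Real.sqrt_le_sqrt hSlb
    rwa [Real.sqrt_sq (by positivity)] at this
  have hsnn : 0 ≤ Real.sqrt ((f ^ 2 * (1 + δ₁) + g ^ 2 * (1 + δ₂)) * (1 + δ₃)) :=
    Real.sqrt_nonneg _
  have hup : Real.sqrt ((f ^ 2 * (1 + δ₁) + g ^ 2 * (1 + δ₂)) * (1 + δ₃)) * (1 + δ₄) ≤
      (1 + u) ^ 2 * Real.sqrt (f ^ 2 + g ^ 2) := by
    have a1 := mul_le_mul_of_nonneg_left (by linarith : (1:ℝ) + δ₄ ≤ 1 + u) hsnn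
    have a2 := mul_le_mul_of_nonneg_right hsub (by linarith : (0:ℝ) ≤ 1 + u)
    have heq : (1 + u) * Real.sqrt (f ^ 2 + g ^ 2) * (1 + u) =
        (1 + u) ^ 2 * Real.sqrt (f ^ 2 + g ^ 2) := by ring
    linarith
  have hlo : (1 - u) ^ 2 * Real.sqrt (f ^ 2 + g ^ 2) ≤
      Real.sqrt ((f ^ 2 * (1 + δ₁) + g ^ 2 * (1 + δ₂)) * (1 + δ₃)) * (1 + δ₄) := by
    have a1 := mul_le_mul_of_nonneg_left (by linarith : (1:ℝ) - u ≤ 1 + δ₄) hsnn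
    have a2 := mul_le_mul_of_nonneg_right hslb (by linarith : (0:ℝ) ≤ 1 - u)
    have heq : (1 - u) * Real.sqrt (f ^ 2 + g ^ 2) * (1 - u) =
        (1 - u) ^ 2 * Real.sqrt (f ^ 2 + g ^ 2) := by ring
    linarith
  have hγ : 2 * u + u ^ 2 ≤ 3 * u / (1 - 3 * u) := by
    rw [le_div_iff₀ hu3]
    have hpos : (0:ℝ) ≤ u + 5 * u ^ 2 + 3 * u ^ 3 := by positivity
    have hring : (2 * u + u ^ 2) * (1 - 3 * u) = 3 * u - (u + 5 * u ^ 2 + 3 * u ^ 3) := by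
      ring
    linarith
  have hγr : (2 * u + u ^ 2) * Real.sqrt (f ^ 2 + g ^ 2) ≤
      3 * u / (1 - 3 * u) * Real.sqrt (f ^ 2 + g ^ 2) :=
    mul_le_mul_of_nonneg_right hγ hrpos.le
  have hr1 : (1 + u) ^ 2 * Real.sqrt (f ^ 2 + g ^ 2) =
      Real.sqrt (f ^ 2 + g ^ 2) + (2 * u + u ^ 2) * Real.sqrt (f ^ 2 + g ^ 2) := by ring
  have hr2 : (1 - u) ^ 2 * Real.sqrt (f ^ 2 + g ^ 2) =
      Real.sqrt (f ^ 2 + g ^ 2) - (2 * u - u ^ 2) * Real.sqrt (f ^ 2 + g ^ 2) := by ring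
  have hr3 : (2 * u - u ^ 2) * Real.sqrt (f ^ 2 + g ^ 2) ≤
      (2 * u + u ^ 2) * Real.sqrt (f ^ 2 + g ^ 2) :=
    mul_le_mul_of_nonneg_right (by nlinarith [sq_nonneg u, hu]) hrpos.le
  rw [abs_le]
  constructor <;> linarith
end

section
/- Let u be a real number with 0 < u ≤ 1/24. Let f, g ∈ ℂ with f ≠ 0, and let δ_1, δ_1', δ_2, δ_2', δ_3, δ_4, δ_5, δ_6, δ_7 be real numbers each with absolute value at most u. Define f₂ := ((Re f)²(1 + δ_1) + (Im f)²(1 + δ_1'))·(1 + δ_3) and g₂ := ((Re g)²(1 + δ_2) + (Im g)²(1 + δ_2'))·(1 + δ_4). Define ĉ := sqrt( (f₂ / ((f₂ + g₂)(1 + δ_5))) · (1 + δ_6) ) · (1 + δ_7). Then |ĉ - c| ≤ γ_5·c, where c := |f|/sqrt(|f|² + |g|²) and γ_5 := 5u/(1 - 5u). (This is the worst-case error bound for the cosine computed by the proposed new complex Givens rotation algorithm.) -/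
private lemma key1 (u : ℝ) (hu : 0 < u) (hu' : u ≤ 1/24) :
    (1+u)^5*(1-5*u)^2 ≤ (1-u)^3 := by
  have e2 : u^2 ≤ u/24 := by nlinarith
  have e3 : u^3 ≤ u^2/24 := by nlinarith
  have e4 : u^4 ≤ u^3/24 := by nlinarith
  have e5 : u^5 ≤ u^4/24 := by nlinarith
  have e6 : u^6 ≤ u^5/24 := by nlinarith
  have e7 : u^7 ≤ u^6/24 := by nlinarith
  nlinarith [e2,e3,e4,e5,e6,e7]

private lemma key2 (u : ℝ) (hu : 0 < u) (hu' : u ≤ 1/24) :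
    (1-10*u)^2*(1+u)^3 ≤ (1-u)^5*(1-5*u)^2 := by
  have e2 : u^2 ≤ u/24 := by nlinarith
  have e3 : u^3 ≤ u^2/24 := by nlinarith
  have e4 : u^4 ≤ u^3/24 := by nlinarith
  have e5 : u^5 ≤ u^4/24 := by nlinarith
  have e6 : u^6 ≤ u^5/24 := by nlinarith
  have e7 : u^7 ≤ u^6/24 := by nlinarith
  nlinarith [e2,e3,e4,e5,e6,e7]

private lemma prod_bnd (u a b : ℝ) (hu1 : u ≤ 1) (ha : |a| ≤ u) (hb : |b| ≤ u) :
    (1-u)^2 ≤ (1+a)*(1+b) ∧ (1+a)*(1+b) ≤ (1+u)^2 := by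
  obtain ⟨ha1, ha2⟩ := abs_le.mp ha
  obtain ⟨hb1, hb2⟩ := abs_le.mp hb
  constructor
  · nlinarith [mul_le_mul (show (1-u) ≤ 1+a by linarith) (show (1-u) ≤ 1+b by linarith)
      (show (0:ℝ) ≤ 1-u by linarith) (show (0:ℝ) ≤ 1+a by linarith)]
  · nlinarith [mul_le_mul (show 1+a ≤ 1+u by linarith) (show 1+b ≤ 1+u by linarith)
      (show (0:ℝ) ≤ 1+b by linarith) (show (0:ℝ) ≤ 1+u by linarith)]

/-- Worst-case error of the cosine in the proposed new complex Givens algorithm: with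
`f ≠ 0`, rounding errors bounded by `u ≤ 1/24`, and the computed squared moduli
`f₂, g₂`, the computed `ĉ = sqrt ((f₂/((f₂ + g₂)(1 + δ_5)))·(1 + δ_6))·(1 + δ_7)`
satisfies `|ĉ - c| ≤ γ_5·c`, where `c = |f|/sqrt (|f|² + |g|²)` and `γ_5 = 5u/(1 - 5u)`. -/
theorem new_clartg_c_error (u : ℝ) (hu : 0 < u) (hu' : u ≤ 1 / 24)
    (f g : ℂ) (hf : f ≠ 0)
    (δ₁ δ₁' δ₂ δ₂' δ₃ δ₄ δ₅ δ₆ δ₇ : ℝ)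
    (h₁ : |δ₁| ≤ u) (h₁' : |δ₁'| ≤ u) (h₂ : |δ₂| ≤ u) (h₂' : |δ₂'| ≤ u)
    (h₃ : |δ₃| ≤ u) (h₄ : |δ₄| ≤ u) (h₅ : |δ₅| ≤ u) (h₆ : |δ₆| ≤ u) (h₇ : |δ₇| ≤ u) :
    let f₂ : ℝ := (f.re ^ 2 * (1 + δ₁) + f.im ^ 2 * (1 + δ₁')) * (1 + δ₃)
    let g₂ : ℝ := (g.re ^ 2 * (1 + δ₂) + g.im ^ 2 * (1 + δ₂')) * (1 + δ₄)
    let c : ℝ := ‖f‖ / Real.sqrt (‖f‖ ^ 2 + ‖g‖ ^ 2)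
    |Real.sqrt (f₂ / ((f₂ + g₂) * (1 + δ₅)) * (1 + δ₆)) * (1 + δ₇) - c| ≤
      5 * u / (1 - 5 * u) * c := by
  intro f₂ g₂ c
  have hf₂ : f₂ = (f.re ^ 2 * (1 + δ₁) + f.im ^ 2 * (1 + δ₁')) * (1 + δ₃) := rfl
  have hg₂ : g₂ = (g.re ^ 2 * (1 + δ₂) + g.im ^ 2 * (1 + δ₂')) * (1 + δ₄) := rfl
  have hc : c = ‖f‖ / Real.sqrt (‖f‖ ^ 2 + ‖g‖ ^ 2) := rfl
  clear_value f₂ g₂ c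
  obtain ⟨h₅l, h₅u⟩ := abs_le.mp h₅
  obtain ⟨h₆l, h₆u⟩ := abs_le.mp h₆
  obtain ⟨h₇l, h₇u⟩ := abs_le.mp h₇
  have hu1 : u ≤ 1 := by linarith only [hu']
  have h1mu : (0:ℝ) < 1 - u := by linarith only [hu']
  have h1pu : (0:ℝ) < 1 + u := by linarith only [hu]
  have h19 : (0:ℝ) < 1 - 5*u := by linarith only [hu']
  have h14 : (0:ℝ) < 1 - 10*u := by linarith only [hu']
  obtain ⟨F, hFdef⟩ : ∃ x : ℝ, x = f.re ^ 2 + f.im ^ 2 := ⟨_, rfl⟩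
  obtain ⟨G, hGdef⟩ : ∃ x : ℝ, x = g.re ^ 2 + g.im ^ 2 := ⟨_, rfl⟩
  have hF : 0 < F := by
    have hn := Complex.normSq_pos.mpr hf
    rw [Complex.normSq_apply] at hn
    rw [hFdef]; nlinarith [hn]
  have hG : 0 ≤ G := by rw [hGdef]; positivity
  have hFG : 0 < F + G := by linarith only [hF, hG]
  have habsf2 : ‖f‖ ^ 2 = F := by
    rw [hFdef, Complex.sq_norm, Complex.normSq_apply]; ring
  have habsg2 : ‖g‖ ^ 2 = G := by
    rw [hGdef, Complex.sq_norm, Complex.normSq_apply]; ring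
  have hc_pos : 0 < c := by
    rw [hc]
    apply div_pos (norm_pos_iff.mpr hf)
    apply Real.sqrt_pos.mpr; rw [habsf2, habsg2]; exact hFG
  have hc2 : c ^ 2 = F / (F + G) := by
    rw [hc, div_pow, habsf2, habsg2, Real.sq_sqrt hFG.le]
  -- bounds on f₂, g₂
  have pf1 : (1-u)^2 ≤ (1+δ₁)*(1+δ₃) := (prod_bnd u δ₁ δ₃ hu1 h₁ h₃).1
  have pf2 : (1+δ₁)*(1+δ₃) ≤ (1+u)^2 := (prod_bnd u δ₁ δ₃ hu1 h₁ h₃).2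
  have pf3 : (1-u)^2 ≤ (1+δ₁')*(1+δ₃) := (prod_bnd u δ₁' δ₃ hu1 h₁' h₃).1
  have pf4 : (1+δ₁')*(1+δ₃) ≤ (1+u)^2 := (prod_bnd u δ₁' δ₃ hu1 h₁' h₃).2
  have pg1 : (1-u)^2 ≤ (1+δ₂)*(1+δ₄) := (prod_bnd u δ₂ δ₄ hu1 h₂ h₄).1
  have pg2 : (1+δ₂)*(1+δ₄) ≤ (1+u)^2 := (prod_bnd u δ₂ δ₄ hu1 h₂ h₄).2
  have pg3 : (1-u)^2 ≤ (1+δ₂')*(1+δ₄) := (prod_bnd u δ₂' δ₄ hu1 h₂' h₄).1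
  have pg4 : (1+δ₂')*(1+δ₄) ≤ (1+u)^2 := (prod_bnd u δ₂' δ₄ hu1 h₂' h₄).2
  have hf2ub : f₂ ≤ F * (1+u)^2 := by
    rw [hf₂, hFdef]
    linarith only [mul_le_mul_of_nonneg_left pf2 (sq_nonneg f.re),
      mul_le_mul_of_nonneg_left pf4 (sq_nonneg f.im)]
  have hf2lb : F * (1-u)^2 ≤ f₂ := by
    rw [hf₂, hFdef]
    linarith only [mul_le_mul_of_nonneg_left pf1 (sq_nonneg f.re),
      mul_le_mul_of_nonneg_left pf3 (sq_nonneg f.im)]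
  have hg2ub : g₂ ≤ G * (1+u)^2 := by
    rw [hg₂, hGdef]
    linarith only [mul_le_mul_of_nonneg_left pg2 (sq_nonneg g.re),
      mul_le_mul_of_nonneg_left pg4 (sq_nonneg g.im)]
  have hg2lb : G * (1-u)^2 ≤ g₂ := by
    rw [hg₂, hGdef]
    linarith only [mul_le_mul_of_nonneg_left pg1 (sq_nonneg g.re),
      mul_le_mul_of_nonneg_left pg3 (sq_nonneg g.im)]
  have hf2pos : 0 < f₂ :=
    lt_of_lt_of_le (mul_pos hF (pow_pos h1mu 2)) hf2lb
  have hsumlb : (F + G) * (1-u)^2 ≤ f₂ + g₂ := by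
    linarith only [hf2lb, hg2lb]
  have hsumub : f₂ + g₂ ≤ (F + G) * (1+u)^2 := by
    linarith only [hf2ub, hg2ub]
  have hsumpos : 0 < f₂ + g₂ :=
    lt_of_lt_of_le (mul_pos hFG (pow_pos h1mu 2)) hsumlb
  have hd5 : (0:ℝ) < 1 + δ₅ := by linarith only [h₅l, h1mu]
  have hd6 : (0:ℝ) < 1 + δ₆ := by linarith only [h₆l, h1mu]
  have hdenpos : 0 < (f₂ + g₂) * (1 + δ₅) := mul_pos hsumpos hd5
  set A : ℝ := f₂ / ((f₂ + g₂) * (1 + δ₅)) * (1 + δ₆) with hAdef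
  have hA_eq : A = f₂ * (1 + δ₆) / ((f₂ + g₂) * (1 + δ₅)) := by
    rw [hAdef, div_mul_eq_mul_div]
  have hA_nonneg : 0 ≤ A := by
    rw [hA_eq]; positivity
  -- upper bound on A
  have hA_ub : A ≤ F * (1+u)^3 / ((F + G) * (1-u)^3) := by
    rw [hA_eq]
    have hnum : f₂ * (1 + δ₆) ≤ F * (1+u)^3 := by
      have h := mul_le_mul hf2ub (show 1 + δ₆ ≤ 1 + u by linarith only [h₆u]) hd6.le
        (by positivity : (0:ℝ) ≤ F * (1+u)^2)
      calc f₂ * (1 + δ₆) ≤ F * (1+u)^2 * (1+u) := h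
        _ = F * (1+u)^3 := by ring
    have hden : (F + G) * (1-u)^3 ≤ (f₂ + g₂) * (1 + δ₅) := by
      have h := mul_le_mul hsumlb (show 1 - u ≤ 1 + δ₅ by linarith only [h₅l]) h1mu.le
        hsumpos.le
      calc (F + G) * (1-u)^3 = (F + G) * (1-u)^2 * (1-u) := by ring
        _ ≤ (f₂ + g₂) * (1 + δ₅) := h
    exact div_le_div₀ (by positivity) hnum (by positivity) hden
  have hAU : A ≤ (c / ((1 - 5*u) * (1 + u))) ^ 2 := by
    have hrhs : (c / ((1 - 5*u) * (1 + u))) ^ 2 = F / ((F + G) * ((1 - 5*u) * (1 + u))^2) := by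
      rw [div_pow, hc2, div_div]
    rw [hrhs]
    refine le_trans hA_ub ?_
    rw [div_le_div_iff₀ (by positivity) (by positivity)]
    linarith only [mul_le_mul_of_nonneg_left (key1 u hu hu') (mul_pos hF hFG).le]
  -- lower bound on A
  have hA_lb : F * (1-u)^3 / ((F + G) * (1+u)^3) ≤ A := by
    rw [hA_eq]
    have hnum : F * (1-u)^3 ≤ f₂ * (1 + δ₆) := by
      have h := mul_le_mul hf2lb (show 1 - u ≤ 1 + δ₆ by linarith only [h₆l]) h1mu.le hf2pos.le
      calc F * (1-u)^3 = F * (1-u)^2 * (1-u) := by ring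
        _ ≤ f₂ * (1 + δ₆) := h
    have hden : (f₂ + g₂) * (1 + δ₅) ≤ (F + G) * (1+u)^3 := by
      have h := mul_le_mul hsumub (show 1 + δ₅ ≤ 1 + u by linarith only [h₅u]) hd5.le
        (by positivity : (0:ℝ) ≤ (F+G)*(1+u)^2)
      calc (f₂ + g₂) * (1 + δ₅) ≤ (F + G) * (1+u)^2 * (1+u) := h
        _ = (F + G) * (1+u)^3 := by ring
    exact div_le_div₀ (by positivity) hnum hdenpos hden
  have hAL : (c * (1 - 10*u) / ((1 - 5*u) * (1 - u))) ^ 2 ≤ A := by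
    have hlhs : (c * (1 - 10*u) / ((1 - 5*u) * (1 - u))) ^ 2
        = F * (1 - 10*u)^2 / ((F + G) * ((1 - 5*u) * (1 - u))^2) := by
      rw [div_pow, mul_pow, hc2, div_mul_eq_mul_div, div_div]
    rw [hlhs]
    refine le_trans ?_ hA_lb
    rw [div_le_div_iff₀ (by positivity) (by positivity)]
    linarith only [mul_le_mul_of_nonneg_left (key2 u hu hu') (mul_pos hF hFG).le]
  -- sqrt bounds
  have hsqrt_ub : Real.sqrt A ≤ c / ((1 - 5*u) * (1 + u)) := by
    calc Real.sqrt A ≤ Real.sqrt ((c / ((1 - 5*u) * (1 + u))) ^ 2) := Real.sqrt_le_sqrt hAU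
      _ = c / ((1 - 5*u) * (1 + u)) := Real.sqrt_sq (by positivity)
  have hsqrt_lb : c * (1 - 10*u) / ((1 - 5*u) * (1 - u)) ≤ Real.sqrt A :=
    (Real.le_sqrt (by positivity) hA_nonneg).mpr hAL
  have hsA : 0 ≤ Real.sqrt A := Real.sqrt_nonneg A
  rw [abs_le]
  constructor
  · -- lower: c - kc ≤ sqrt A * (1+δ₇)
    have s1 : c * (1 - 10*u) / ((1 - 5*u) * (1 - u)) * (1 - u) ≤ Real.sqrt A * (1 - u) :=
      mul_le_mul_of_nonneg_right hsqrt_lb h1mu.le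
    have heq : c * (1 - 10*u) / ((1 - 5*u) * (1 - u)) * (1 - u) = c * (1 - 10*u) / (1 - 5*u) := by
      field_simp
    have s2 : Real.sqrt A * (1 - u) ≤ Real.sqrt A * (1 + δ₇) :=
      mul_le_mul_of_nonneg_left (by linarith only [h₇l]) hsA
    have heq2 : 5 * u / (1 - 5*u) * c = c - c * (1 - 10*u) / (1 - 5*u) := by
      field_simp; ring
    rw [heq] at s1
    linarith only [s1, s2, heq2]
  · -- upper
    have s1 : Real.sqrt A * (1 + δ₇) ≤ Real.sqrt A * (1 + u) :=
      mul_le_mul_of_nonneg_left (by linarith only [h₇u]) hsA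
    have s2 : Real.sqrt A * (1 + u) ≤ c / ((1 - 5*u) * (1 + u)) * (1 + u) :=
      mul_le_mul_of_nonneg_right hsqrt_ub h1pu.le
    have heq : c / ((1 - 5*u) * (1 + u)) * (1 + u) = c / (1 - 5*u) := by
      field_simp
    have heq2 : 5 * u / (1 - 5*u) * c = c / (1 - 5*u) - c := by
      field_simp; ring
    rw [heq] at s2
    linarith only [s1, s2, heq2]
end

section
/- Let u be a real number with 0 < u ≤ 1/24. Let f, g ∈ ℂ with f ≠ 0, let δ_1, δ_1', δ_2, δ_2', δ_3, δ_4, δ_5, δ_6 be real numbers each with absolute value at most u, and let ε ∈ ℂ with |ε| ≤ γ_4. Define f₂ := ((Re f)²(1 + δ_1) + (Im f)²(1 + δ_1'))·(1 + δ_3) and g₂ := ((Re g)²(1 + δ_2) + (Im g)²(1 + δ_2'))·(1 + δ_4). Define ŝ := conj(g)·f·(1 + ε) / sqrt( f₂·(f₂ + g₂)·(1 + δ_5)·(1 + δ_6) ). Then |ŝ - s| ≤ γ_8·|s|, where s := conj(g)·f / (|f|·sqrt(|f|² + |g|²)), γ_4 := 4u/(1 - 4u) and γ_8 := 8u/(1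 - 8u). (This is the worst-case error bound for the sine computed by the proposed new complex Givens rotation algorithm in its unexceptional branch.) -/
private lemma quad_lower (x y d d' e u : ℝ) (h1 : 0 < 1 - u)
    (hd : -u ≤ d) (hd' : -u ≤ d') (he : -u ≤ e) :
    (x^2 + y^2) * (1-u)^2 ≤ (x^2*(1+d) + y^2*(1+d'))*(1+e) := by
  have l1 : (x^2 + y^2)*(1-u) ≤ x^2*(1+d) + y^2*(1+d') := by
    have := mul_le_mul_of_nonneg_left (by linarith : 1 - u ≤ 1 + d) (sq_nonneg x)
    have := mul_le_mul_of_nonneg_left (by linarith : 1 - u ≤ 1 + d') (sq_nonneg y)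
    nlinarith
  calc (x^2 + y^2) * (1-u)^2 = ((x^2 + y^2)*(1-u)) * (1-u) := by ring
    _ ≤ (x^2*(1+d) + y^2*(1+d'))*(1+e) := by
        apply mul_le_mul l1 (by linarith) h1.le
        nlinarith [sq_nonneg x, sq_nonneg y]

private lemma quad_upper (x y d d' e u : ℝ) (h1 : 0 < 1 - u) (hu : 0 ≤ u)
    (hd : d ≤ u) (hd' : d' ≤ u) (he' : -u ≤ e) (he : e ≤ u) :
    (x^2*(1+d) + y^2*(1+d'))*(1+e) ≤ (x^2 + y^2) * (1+u)^2 := by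
  have l1 : x^2*(1+d) + y^2*(1+d') ≤ (x^2 + y^2)*(1+u) := by
    have := mul_le_mul_of_nonneg_left (by linarith : 1 + d ≤ 1 + u) (sq_nonneg x)
    have := mul_le_mul_of_nonneg_left (by linarith : 1 + d' ≤ 1 + u) (sq_nonneg y)
    nlinarith
  calc (x^2*(1+d) + y^2*(1+d'))*(1+e) ≤ ((x^2 + y^2)*(1+u)) * (1+u) := by
        apply mul_le_mul l1 (by linarith) (by linarith)
        exact mul_nonneg (by positivity) (by linarith)
    _ = (x^2 + y^2) * (1+u)^2 := by ring

private lemma final_ineq (u S D E : ℝ) (hu : 0 < u) (hu' : u ≤ 1/24) (hS : 0 < S)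
    (hDl : S*(1-u)^3 ≤ D) (hDu : D ≤ S*(1+u)^3)
    (hE : E ≤ 4*u/(1-4*u)) :
    S * E + |S - D| ≤ 8*u/(1-8*u) * D := by
  have h4u : (0:ℝ) < 1 - 4*u := by linarith
  have h8u : (0:ℝ) < 1 - 8*u := by linarith
  have hSD : |S - D| ≤ S * ((1+u)^3 - 1) := by
    have k3 : 0 ≤ S * (u * u) := mul_nonneg hS.le (mul_nonneg hu.le hu.le)
    rw [abs_le]
    constructor
    · nlinarith [hDu, k3]
    · nlinarith [hDl, k3]
  have hεS : S * E ≤ S * (4 * u / (1 - 4*u)) := mul_le_mul_of_nonneg_left hE hS.le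
  have hfin : 4*u/(1-4*u) + ((1+u)^3 - 1) ≤ 8*u/(1-8*u) * (1-u)^3 := by
    rw [div_add' _ _ _ h4u.ne', div_mul_eq_mul_div, div_le_div_iff₀ h4u h8u]
    have k1 : 0 ≤ u * u := mul_nonneg hu.le hu.le
    have k2 : 0 ≤ u * u * u * (59 - 188 * u) :=
      mul_nonneg (mul_nonneg k1 hu.le) (by linarith)
    nlinarith [k1, k2]
  have hstep : S * (4 * u / (1 - 4*u)) + S * ((1+u)^3 - 1)
      ≤ 8 * u / (1 - 8*u) * (S * (1-u)^3) := by
    have := mul_le_mul_of_nonneg_left hfin hS.le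
    calc S * (4 * u / (1 - 4*u)) + S * ((1+u)^3 - 1)
        = S * (4*u/(1-4*u) + ((1+u)^3 - 1)) := by ring
      _ ≤ S * (8*u/(1-8*u) * (1-u)^3) := this
      _ = 8 * u / (1 - 8*u) * (S * (1-u)^3) := by ring
  have hγ8 : 0 ≤ 8 * u / (1 - 8*u) := by positivity
  calc S * E + |S - D| ≤ S * (4 * u / (1 - 4*u)) + S * ((1+u)^3 - 1) := by linarith
    _ ≤ 8 * u / (1 - 8*u) * (S * (1-u)^3) := hstep
    _ ≤ 8 * u / (1 - 8*u) * D := mul_le_mul_of_nonneg_left hDl hγ8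

set_option maxHeartbeats 1000000 in
/-- Worst-case error of the sine in the proposed new complex Givens algorithm
(unexceptional branch): with `f ≠ 0`, rounding errors bounded by `u ≤ 1/24`, a complex
perturbation `|ε| ≤ γ_4`, and the computed squared moduli `f₂, g₂`, the computed
`ŝ = conj g·f·(1 + ε)/sqrt (f₂·(f₂ + g₂)·(1 + δ_5)·(1 + δ_6))` satisfies
`|ŝ - s| ≤ γ_8·|s|`, where `s = conj g·f/(|f|·sqrt (|f|² + |g|²))`. -/
theorem new_clartg_s_error (u : ℝ) (hu : 0 < u) (hu' : u ≤ 1 / 24)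
    (f g : ℂ) (hf : f ≠ 0)
    (δ₁ δ₁' δ₂ δ₂' δ₅ δ₆ δ₃ δ₄ : ℝ)
    (h₁ : |δ₁| ≤ u) (h₁' : |δ₁'| ≤ u) (h₂ : |δ₂| ≤ u) (h₂' : |δ₂'| ≤ u)
    (h₃ : |δ₃| ≤ u) (h₄ : |δ₄| ≤ u) (h₅ : |δ₅| ≤ u) (h₆ : |δ₆| ≤ u)
    (ε : ℂ) (hε : ‖ε‖ ≤ 4 * u / (1 - 4 * u)) :
    let f₂ : ℝ := (f.re ^ 2 * (1 + δ₁) + f.im ^ 2 * (1 + δ₁')) * (1 + δ₃)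
    let g₂ : ℝ := (g.re ^ 2 * (1 + δ₂) + g.im ^ 2 * (1 + δ₂')) * (1 + δ₄)
    let s : ℂ := starRingEnd ℂ g * f /
      ((‖f‖ : ℂ) * (Real.sqrt (‖f‖ ^ 2 + ‖g‖ ^ 2) : ℂ))
    ‖starRingEnd ℂ g * f * (1 + ε) /
        ((Real.sqrt (f₂ * (f₂ + g₂) * (1 + δ₅) * (1 + δ₆)) : ℝ) : ℂ) - s‖ ≤
      8 * u / (1 - 8 * u) * ‖s‖ := by
  intro f₂ g₂ s
  have hf2def : f₂ = (f.re ^ 2 * (1 + δ₁) + f.im ^ 2 * (1 + δ₁')) * (1 + δ₃) := rfl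
  have hg2def : g₂ = (g.re ^ 2 * (1 + δ₂) + g.im ^ 2 * (1 + δ₂')) * (1 + δ₄) := rfl
  have hsdef : s = starRingEnd ℂ g * f /
      ((‖f‖ : ℂ) * (Real.sqrt (‖f‖ ^ 2 + ‖g‖ ^ 2) : ℂ)) := rfl
  clear_value f₂ g₂ s
  obtain ⟨h₁l, h₁u⟩ := abs_le.mp h₁
  obtain ⟨h₁l', h₁u'⟩ := abs_le.mp h₁'
  obtain ⟨h₂l, h₂u⟩ := abs_le.mp h₂
  obtain ⟨h₂l', h₂u'⟩ := abs_le.mp h₂'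
  obtain ⟨h₃l, h₃u⟩ := abs_le.mp h₃
  obtain ⟨h₄l, h₄u⟩ := abs_le.mp h₄
  obtain ⟨h₅l, h₅u⟩ := abs_le.mp h₅
  obtain ⟨h₆l, h₆u⟩ := abs_le.mp h₆
  have h1u : (0:ℝ) < 1 - u := by linarith
  have h4u : (0:ℝ) < 1 - 4*u := by linarith
  have h8u : (0:ℝ) < 1 - 8*u := by linarith
  obtain ⟨a, ha_def⟩ : ∃ x, ‖f‖ = x := ⟨_, rfl⟩
  obtain ⟨b, hb_def⟩ : ∃ x, ‖g‖ = x := ⟨_, rfl⟩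
  rw [ha_def, hb_def] at hsdef
  have ha : 0 < a := ha_def ▸ norm_pos_iff.mpr hf
  have hb : 0 ≤ b := hb_def ▸ norm_nonneg g
  have hA : a ^ 2 = f.re ^ 2 + f.im ^ 2 := by
    rw [← ha_def, Complex.sq_norm, Complex.normSq_apply]; ring
  have hB : b ^ 2 = g.re ^ 2 + g.im ^ 2 := by
    rw [← hb_def, Complex.sq_norm, Complex.normSq_apply]; ring
  have hf2l : a ^ 2 * (1-u)^2 ≤ f₂ := by
    rw [hf2def, hA]; exact quad_lower _ _ _ _ _ _ h1u h₁l h₁l' h₃l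
  have hf2u : f₂ ≤ a ^ 2 * (1+u)^2 := by
    rw [hf2def, hA]; exact quad_upper _ _ _ _ _ _ h1u hu.le h₁u h₁u' h₃l h₃u
  have hg2l : b ^ 2 * (1-u)^2 ≤ g₂ := by
    rw [hg2def, hB]; exact quad_lower _ _ _ _ _ _ h1u h₂l h₂l' h₄l
  have hg2u : g₂ ≤ b ^ 2 * (1+u)^2 := by
    rw [hg2def, hB]; exact quad_upper _ _ _ _ _ _ h1u hu.le h₂u h₂u' h₄l h₄u
  have ha2 : 0 < a ^ 2 := pow_pos ha 2
  have hb2 : 0 ≤ b ^ 2 := sq_nonneg b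
  have hf2pos : 0 < f₂ := lt_of_lt_of_le (by positivity) hf2l
  have hg2pos : 0 ≤ g₂ := le_trans (by positivity) hg2l
  obtain ⟨S, hS_def⟩ : ∃ x, a * Real.sqrt (a^2 + b^2) = x := ⟨_, rfl⟩
  have hABpos : 0 < a^2 + b^2 := by positivity
  have hSpos : 0 < S := hS_def ▸ mul_pos ha (Real.sqrt_pos.mpr hABpos)
  have hS2 : S^2 = a^2 * (a^2 + b^2) := by
    rw [← hS_def, mul_pow, Real.sq_sqrt hABpos.le]
  obtain ⟨P, hP_def⟩ : ∃ x, f₂ * (f₂ + g₂) * (1 + δ₅) * (1 + δ₆) = x := ⟨_, rfl⟩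
  have hPpos : 0 < P := by
    rw [← hP_def]
    apply mul_pos (mul_pos (mul_pos hf2pos (by linarith)) (by linarith)) (by linarith)
  have hPl : S^2 * ((1-u)^2)^3 ≤ P := by
    have e1 : (a^2 + b^2)*(1-u)^2 ≤ f₂ + g₂ := by
      have := add_le_add hf2l hg2l; linarith
    have h1 : a^2*(1-u)^2 * ((a^2 + b^2)*(1-u)^2) ≤ f₂ * (f₂ + g₂) :=
      mul_le_mul hf2l e1 (by positivity) hf2pos.le
    have h2 : a^2*(1-u)^2 * ((a^2 + b^2)*(1-u)^2) * (1-u) ≤ f₂ * (f₂ + g₂) * (1 + δ₅) :=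
      mul_le_mul h1 (by linarith) h1u.le (by positivity)
    have h3 : a^2*(1-u)^2 * ((a^2 + b^2)*(1-u)^2) * (1-u) * (1-u)
        ≤ f₂ * (f₂ + g₂) * (1 + δ₅) * (1 + δ₆) :=
      mul_le_mul h2 (by linarith) h1u.le
        (le_trans (by positivity) h2)
    calc S^2 * ((1-u)^2)^3
        = a^2*(1-u)^2 * ((a^2 + b^2)*(1-u)^2) * (1-u) * (1-u) := by rw [hS2]; ring
      _ ≤ P := hP_def ▸ h3
  have hPu : P ≤ S^2 * ((1+u)^2)^3 := by
    have e1 : f₂ + g₂ ≤ (a^2 + b^2)*(1+u)^2 := by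
      have := add_le_add hf2u hg2u; linarith
    have h1 : f₂ * (f₂ + g₂) ≤ a^2*(1+u)^2 * ((a^2 + b^2)*(1+u)^2) :=
      mul_le_mul hf2u e1 (by linarith) (by positivity)
    have h2 : f₂ * (f₂ + g₂) * (1 + δ₅) ≤ a^2*(1+u)^2 * ((a^2 + b^2)*(1+u)^2) * (1+u) :=
      mul_le_mul h1 (by linarith) (by linarith) (by positivity)
    have h3 : f₂ * (f₂ + g₂) * (1 + δ₅) * (1 + δ₆)
        ≤ a^2*(1+u)^2 * ((a^2 + b^2)*(1+u)^2) * (1+u) * (1+u) :=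
      mul_le_mul h2 (by linarith) (by linarith) (by positivity)
    calc P ≤ a^2*(1+u)^2 * ((a^2 + b^2)*(1+u)^2) * (1+u) * (1+u) := hP_def ▸ h3
      _ = S^2 * ((1+u)^2)^3 := by rw [hS2]; ring
  obtain ⟨D, hD_def⟩ : ∃ x, Real.sqrt P = x := ⟨_, rfl⟩
  have hDpos : 0 < D := hD_def ▸ Real.sqrt_pos.mpr hPpos
  have hDl : S * (1-u)^3 ≤ D := by
    rw [← hD_def, show S * (1-u)^3 = Real.sqrt ((S * (1-u)^3)^2) from
      (Real.sqrt_sq (by positivity)).symm]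
    apply Real.sqrt_le_sqrt
    calc (S * (1-u)^3)^2 = S^2 * ((1-u)^2)^3 := by ring
      _ ≤ P := hPl
  have hDu : D ≤ S * (1+u)^3 := by
    rw [← hD_def, show S * (1+u)^3 = Real.sqrt ((S * (1+u)^3)^2) from
      (Real.sqrt_sq (by positivity)).symm]
    apply Real.sqrt_le_sqrt
    calc P ≤ S^2 * ((1+u)^2)^3 := hPu
      _ = (S * (1+u)^3)^2 := by ring
  -- complex part
  have hs : s = starRingEnd ℂ g * f / (S : ℂ) := by
    rw [hsdef, ← hS_def]; push_cast; ring_nf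
  have hSne : (S : ℂ) ≠ 0 := Complex.ofReal_ne_zero.mpr hSpos.ne'
  have hDne : (D : ℂ) ≠ 0 := Complex.ofReal_ne_zero.mpr hDpos.ne'
  have key : starRingEnd ℂ g * f * (1 + ε) / (D : ℂ) - starRingEnd ℂ g * f / (S : ℂ)
      = (starRingEnd ℂ g * f / (S : ℂ)) * (((S : ℂ) * (1 + ε) - (D : ℂ)) / (D : ℂ)) := by
    field_simp
  rw [hs, hP_def, hD_def, key, norm_mul]
  have habs : ‖((S : ℂ) * (1 + ε) - (D : ℂ)) / (D : ℂ)‖ ≤ 8 * u / (1 - 8 * u) := by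
    rw [norm_div, Complex.norm_real, Real.norm_eq_abs, abs_of_pos hDpos, div_le_iff₀ hDpos]
    have tri : ‖(S : ℂ) * (1 + ε) - (D : ℂ)‖ ≤ S * ‖ε‖ + |S - D| := by
      have e : (S : ℂ) * (1 + ε) - (D : ℂ) = (S : ℂ) * ε + (((S - D : ℝ)) : ℂ) := by
        push_cast; ring
      rw [e]
      calc ‖(S : ℂ) * ε + (((S - D : ℝ)) : ℂ)‖
          ≤ ‖(S : ℂ) * ε‖ + ‖((S - D : ℝ) : ℂ)‖ := norm_add_le _ _
        _ = S * ‖ε‖ + |S - D| := by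
            rw [norm_mul, Complex.norm_real, Complex.norm_real, Real.norm_eq_abs, Real.norm_eq_abs, abs_of_pos hSpos]
    calc ‖(S : ℂ) * (1 + ε) - (D : ℂ)‖ ≤ S * ‖ε‖ + |S - D| := tri
      _ ≤ 8 * u / (1 - 8*u) * D := final_ineq u S D (‖ε‖) hu hu' hSpos hDl hDu hε
  calc ‖starRingEnd ℂ g * f / (S:ℂ)‖ * ‖((S:ℂ) * (1 + ε) - (D:ℂ)) / (D:ℂ)‖
      ≤ ‖starRingEnd ℂ g * f / (S:ℂ)‖ * (8 * u / (1 - 8 * u)) :=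
        mul_le_mul_of_nonneg_left habs (norm_nonneg _)
    _ = 8 * u / (1 - 8 * u) * ‖starRingEnd ℂ g * f / (S:ℂ)‖ := by ring
end

section
/- Let u be a real number with 0 < u ≤ 1/24. Let f, g ∈ ℂ with f ≠ 0, and let δ_1, δ_1', δ_2, δ_2', δ_3, δ_4, δ_h, δ_a, δ_b, δ_c, δ_d be real numbers each with absolute value at most u. Define f₂ := ((Re f)²(1 + δ_1) + (Im f)²(1 + δ_1'))·(1 + δ_3), g₂ := ((Re g)²(1 + δ_2) + (Im g)²(1 + δ_2'))·(1 + δ_4), and h₂ := (f₂ + g₂)·(1 + δ_h). Define ĉ := f₂·(1 + δ_c)·(1 + δ_d) / ( sqrt( f₂·h₂·(1 + δ_a) ) · (1 + δ_b) ). Then |ĉ - c| ≤ γ_7·c, where c := |f|/sqrt(|f|² + |g|²) and γ_7 := 7u/(1 - 7u). (This is the worst-case error bound for the cosine computed by the LAPACK 3.10 complex Givens rotation algorithm, which forms p = 1/sqrt(f₂·h₂) and returns c = f₂·p.) -/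
private lemma prod_lb {L l x y : ℝ} (hL : 0 ≤ L) (hl : 0 ≤ l) (hx : L ≤ x) (hy : l ≤ y) :
    L * l ≤ x * y := mul_le_mul hx hy hl (hL.trans hx)

private lemma prod_ub {M m x y : ℝ} (hx0 : 0 ≤ x) (hy0 : 0 ≤ y) (hx : x ≤ M) (hy : y ≤ m) :
    x * y ≤ M * m := mul_le_mul hx hy hy0 (hx0.trans hx)

private lemma q_upper (u : ℝ) (hu : 0 < u) (hu' : u ≤ 1 / 24) :
    (1 + u) ^ 3 / (1 - u) ^ 3 ≤ 1 + 7 * u / (1 - 7 * u) := by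
  have hu1 : (0:ℝ) < 1 - u := by linarith
  have hu7 : (0:ℝ) < 1 - 7 * u := by linarith
  have he : (1:ℝ) + 7 * u / (1 - 7 * u) = 1 / (1 - 7 * u) := by field_simp; ring
  rw [he, div_le_div_iff₀ (by positivity) hu7]
  nlinarith [pow_pos hu 2, pow_pos hu 3, pow_pos hu 4]

private lemma q_lower (u : ℝ) (hu : 0 < u) (hu' : u ≤ 1 / 24) :
    1 - 7 * u / (1 - 7 * u) ≤ (1 - u) ^ 3 / (1 + u) ^ 3 := by
  have hu1 : (0:ℝ) < 1 - u := by linarith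
  have hu7 : (0:ℝ) < 1 - 7 * u := by linarith
  have he : (1:ℝ) - 7 * u / (1 - 7 * u) = (1 - 14 * u) / (1 - 7 * u) := by
    field_simp; ring
  rw [he, div_le_div_iff₀ hu7 (by positivity)]
  nlinarith [pow_pos hu 2, pow_pos hu 3, pow_pos hu 4]

set_option maxHeartbeats 1000000 in
/-- Worst-case error of the cosine in the LAPACK 3.10 complex Givens algorithm: with
`f ≠ 0`, rounding errors bounded by `u ≤ 1/24`, and the computed quantities `f₂, g₂, h₂`,
the computed `ĉ = f₂·(1 + δ_c)·(1 + δ_d)/(sqrt (f₂·h₂·(1 + δ_a))·(1 + δ_b))` satisfies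
`|ĉ - c| ≤ γ_7·c`, where `c = |f|/sqrt (|f|² + |g|²)` and `γ_7 = 7u/(1 - 7u)`. -/
theorem lapack310_clartg_c_error (u : ℝ) (hu : 0 < u) (hu' : u ≤ 1 / 24)
    (f g : ℂ) (hf : f ≠ 0)
    (δ₁ δ₁' δ₂ δ₂' δ₃ δ₄ δh δa δb δc δd : ℝ)
    (h₁ : |δ₁| ≤ u) (h₁' : |δ₁'| ≤ u) (h₂ : |δ₂| ≤ u) (h₂' : |δ₂'| ≤ u)
    (h₃ : |δ₃| ≤ u) (h₄ : |δ₄| ≤ u) (hh : |δh| ≤ u) (hab : |δa| ≤ u) (hbb : |δb| ≤ u)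
    (hcc : |δc| ≤ u) (hdd : |δd| ≤ u) :
    let f₂ : ℝ := (f.re ^ 2 * (1 + δ₁) + f.im ^ 2 * (1 + δ₁')) * (1 + δ₃)
    let g₂ : ℝ := (g.re ^ 2 * (1 + δ₂) + g.im ^ 2 * (1 + δ₂')) * (1 + δ₄)
    let h₂ : ℝ := (f₂ + g₂) * (1 + δh)
    let c : ℝ := ‖f‖ / Real.sqrt (‖f‖ ^ 2 + ‖g‖ ^ 2)
    |f₂ * (1 + δc) * (1 + δd) / (Real.sqrt (f₂ * h₂ * (1 + δa)) * (1 + δb)) - c| ≤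
      7 * u / (1 - 7 * u) * c := by
  intro f₂ g₂ hh₂ c
  have hu1 : (0:ℝ) < 1 - u := by linarith
  have hu7 : (0:ℝ) < 1 - 7 * u := by linarith
  obtain ⟨l1, r1⟩ := abs_le.mp h₁
  obtain ⟨l1', r1'⟩ := abs_le.mp h₁'
  obtain ⟨l2, r2⟩ := abs_le.mp h₂
  obtain ⟨l2', r2'⟩ := abs_le.mp h₂'
  obtain ⟨l3, r3⟩ := abs_le.mp h₃
  obtain ⟨l4, r4⟩ := abs_le.mp h₄
  obtain ⟨lh, rh⟩ := abs_le.mp hh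
  obtain ⟨la, ra⟩ := abs_le.mp hab
  obtain ⟨lb, rb⟩ := abs_le.mp hbb
  obtain ⟨lc, rc⟩ := abs_le.mp hcc
  obtain ⟨ld, rd⟩ := abs_le.mp hdd
  set a := ‖f‖ with ha
  set b := ‖g‖ with hb
  have hapos : 0 < a := norm_pos_iff.mpr hf
  have hbnn : 0 ≤ b := norm_nonneg g
  have hFre : a ^ 2 = f.re ^ 2 + f.im ^ 2 := by
    rw [ha, Complex.sq_norm, Complex.normSq_apply]; ring
  have hGre : b ^ 2 = g.re ^ 2 + g.im ^ 2 := by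
    rw [hb, Complex.sq_norm, Complex.normSq_apply]; ring
  set S := Real.sqrt (a ^ 2 + b ^ 2) with hS
  have hSpos : 0 < S := Real.sqrt_pos.2 (by positivity)
  have hS2 : S ^ 2 = a ^ 2 + b ^ 2 := Real.sq_sqrt (by positivity)
  have hcdef : c = a / S := rfl
  have hcpos : 0 < c := by rw [hcdef]; positivity
  -- bounds on f₂
  have hf2def : f₂ = (f.re ^ 2 * (1 + δ₁) + f.im ^ 2 * (1 + δ₁')) * (1 + δ₃) := rfl
  have hre1 : f.re ^ 2 * (1 - u) ≤ f.re ^ 2 * (1 + δ₁) :=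
    mul_le_mul_of_nonneg_left (by linarith) (sq_nonneg f.re)
  have hre1' : f.re ^ 2 * (1 + δ₁) ≤ f.re ^ 2 * (1 + u) :=
    mul_le_mul_of_nonneg_left (by linarith) (sq_nonneg f.re)
  have him1 : f.im ^ 2 * (1 - u) ≤ f.im ^ 2 * (1 + δ₁') :=
    mul_le_mul_of_nonneg_left (by linarith) (sq_nonneg f.im)
  have him1' : f.im ^ 2 * (1 + δ₁') ≤ f.im ^ 2 * (1 + u) :=
    mul_le_mul_of_nonneg_left (by linarith) (sq_nonneg f.im)
  have hinfl : a ^ 2 * (1 - u) ≤ f.re ^ 2 * (1 + δ₁) + f.im ^ 2 * (1 + δ₁') := by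
    rw [hFre]; linarith [hre1, him1]
  have hinfr : f.re ^ 2 * (1 + δ₁) + f.im ^ 2 * (1 + δ₁') ≤ a ^ 2 * (1 + u) := by
    rw [hFre]; linarith [hre1', him1']
  have hf2l : a ^ 2 * (1 - u) ^ 2 ≤ f₂ := by
    rw [hf2def]
    have := prod_lb (show (0:ℝ) ≤ a ^ 2 * (1 - u) by positivity) hu1.le hinfl
      (show 1 - u ≤ 1 + δ₃ by linarith)
    linarith [this]
  have hf2r : f₂ ≤ a ^ 2 * (1 + u) ^ 2 := by
    rw [hf2def]
    have := prod_ub (le_trans (by positivity) hinfl) (show (0:ℝ) ≤ 1 + δ₃ by linarith)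
      hinfr (show 1 + δ₃ ≤ 1 + u by linarith)
    linarith [this]
  have hf2pos : 0 < f₂ := lt_of_lt_of_le (by positivity) hf2l
  -- bounds on g₂
  have hg2def : g₂ = (g.re ^ 2 * (1 + δ₂) + g.im ^ 2 * (1 + δ₂')) * (1 + δ₄) := rfl
  have hre2 : g.re ^ 2 * (1 - u) ≤ g.re ^ 2 * (1 + δ₂) :=
    mul_le_mul_of_nonneg_left (by linarith) (sq_nonneg g.re)
  have hre2' : g.re ^ 2 * (1 + δ₂) ≤ g.re ^ 2 * (1 + u) :=
    mul_le_mul_of_nonneg_left (by linarith) (sq_nonneg g.re)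
  have him2 : g.im ^ 2 * (1 - u) ≤ g.im ^ 2 * (1 + δ₂') :=
    mul_le_mul_of_nonneg_left (by linarith) (sq_nonneg g.im)
  have him2' : g.im ^ 2 * (1 + δ₂') ≤ g.im ^ 2 * (1 + u) :=
    mul_le_mul_of_nonneg_left (by linarith) (sq_nonneg g.im)
  have hingl : b ^ 2 * (1 - u) ≤ g.re ^ 2 * (1 + δ₂) + g.im ^ 2 * (1 + δ₂') := by
    rw [hGre]; linarith [hre2, him2]
  have hingr : g.re ^ 2 * (1 + δ₂) + g.im ^ 2 * (1 + δ₂') ≤ b ^ 2 * (1 + u) := by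
    rw [hGre]; linarith [hre2', him2']
  have hg2l : b ^ 2 * (1 - u) ^ 2 ≤ g₂ := by
    rw [hg2def]
    have := prod_lb (show (0:ℝ) ≤ b ^ 2 * (1 - u) by positivity) hu1.le hingl
      (show 1 - u ≤ 1 + δ₄ by linarith)
    linarith [this]
  have hg2r : g₂ ≤ b ^ 2 * (1 + u) ^ 2 := by
    rw [hg2def]
    have := prod_ub (le_trans (by positivity) hingl) (show (0:ℝ) ≤ 1 + δ₄ by linarith)
      hingr (show 1 + δ₄ ≤ 1 + u by linarith)
    linarith [this]
  -- bounds on h₂ and h₂ * (1 + δa)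
  have hh2def : hh₂ = (f₂ + g₂) * (1 + δh) := rfl
  have hsuml : (a ^ 2 + b ^ 2) * (1 - u) ^ 2 ≤ f₂ + g₂ := by linarith [hf2l, hg2l]
  have hsumr : f₂ + g₂ ≤ (a ^ 2 + b ^ 2) * (1 + u) ^ 2 := by linarith [hf2r, hg2r]
  have hsumpos : (0:ℝ) < f₂ + g₂ := lt_of_lt_of_le (by positivity) hsuml
  have hh2l : (a ^ 2 + b ^ 2) * (1 - u) ^ 3 ≤ hh₂ := by
    rw [hh2def]
    have := prod_lb (show (0:ℝ) ≤ (a ^ 2 + b ^ 2) * (1 - u) ^ 2 by positivity) hu1.le hsuml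
      (show 1 - u ≤ 1 + δh by linarith)
    linarith [this]
  have hh2r : hh₂ ≤ (a ^ 2 + b ^ 2) * (1 + u) ^ 3 := by
    rw [hh2def]
    have := prod_ub hsumpos.le (show (0:ℝ) ≤ 1 + δh by linarith) hsumr
      (show 1 + δh ≤ 1 + u by linarith)
    linarith [this]
  have hh2pos : 0 < hh₂ := lt_of_lt_of_le (by positivity) hh2l
  have hAl : (a ^ 2 + b ^ 2) * (1 - u) ^ 4 ≤ hh₂ * (1 + δa) := by
    have := prod_lb (show (0:ℝ) ≤ (a ^ 2 + b ^ 2) * (1 - u) ^ 3 by positivity) hu1.le hh2l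
      (show 1 - u ≤ 1 + δa by linarith)
    linarith [this]
  have hAr : hh₂ * (1 + δa) ≤ (a ^ 2 + b ^ 2) * (1 + u) ^ 4 := by
    have := prod_ub hh2pos.le (show (0:ℝ) ≤ 1 + δa by linarith) hh2r
      (show 1 + δa ≤ 1 + u by linarith)
    linarith [this]
  -- sqrt bounds
  set s := Real.sqrt f₂ with hs
  set t := Real.sqrt (hh₂ * (1 + δa)) with ht
  have hsl : a * (1 - u) ≤ s := by
    rw [hs, ← Real.sqrt_sq (show (0:ℝ) ≤ a * (1 - u) by positivity)]
    exact Real.sqrt_le_sqrt (by linarith [hf2l])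
  have hsr : s ≤ a * (1 + u) := by
    rw [hs, ← Real.sqrt_sq (show (0:ℝ) ≤ a * (1 + u) by positivity)]
    exact Real.sqrt_le_sqrt (by linarith [hf2r])
  have hspos : 0 < s := lt_of_lt_of_le (by positivity) hsl
  have htl : S * (1 - u) ^ 2 ≤ t := by
    rw [ht, ← Real.sqrt_sq (show (0:ℝ) ≤ S * (1 - u) ^ 2 by positivity)]
    refine Real.sqrt_le_sqrt ?_
    have h1 : (S * (1 - u) ^ 2) ^ 2 = (a ^ 2 + b ^ 2) * (1 - u) ^ 4 := by
      rw [mul_pow, ← hS2]; ring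
    linarith [hAl, h1.le, h1.ge]
  have htr : t ≤ S * (1 + u) ^ 2 := by
    rw [ht, ← Real.sqrt_sq (show (0:ℝ) ≤ S * (1 + u) ^ 2 by positivity)]
    refine Real.sqrt_le_sqrt ?_
    have h1 : (S * (1 + u) ^ 2) ^ 2 = (a ^ 2 + b ^ 2) * (1 + u) ^ 4 := by
      rw [mul_pow, ← hS2]; ring
    linarith [hAr, h1.le, h1.ge]
  have htpos : 0 < t := lt_of_lt_of_le (by positivity) htl
  have hs2 : s ^ 2 = f₂ := Real.sq_sqrt hf2pos.le
  have hb1 : (0:ℝ) < 1 + δb := by linarith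
  -- rewrite the main expression
  have hsplit : Real.sqrt (f₂ * hh₂ * (1 + δa)) = s * t := by
    rw [mul_assoc, Real.sqrt_mul hf2pos.le, hs, ht]
  have hexpr : f₂ * (1 + δc) * (1 + δd) / (Real.sqrt (f₂ * hh₂ * (1 + δa)) * (1 + δb)) =
      s * (1 + δc) * (1 + δd) / (t * (1 + δb)) := by
    rw [hsplit, ← hs2]
    rw [div_eq_div_iff (by positivity) (by positivity)]
    ring
  rw [hexpr]
  -- numerator and denominator bounds
  set N := s * (1 + δc) * (1 + δd) with hN
  set D := t * (1 + δb) with hD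
  have hNcl : a * (1 - u) * (1 - u) ≤ s * (1 + δc) :=
    prod_lb (by positivity) hu1.le hsl (by linarith)
  have hNcr : s * (1 + δc) ≤ a * (1 + u) * (1 + u) :=
    prod_ub hspos.le (by linarith) hsr (by linarith)
  have hNl : a * (1 - u) ^ 3 ≤ N := by
    rw [hN]
    have := prod_lb (show (0:ℝ) ≤ a * (1 - u) * (1 - u) by positivity) hu1.le hNcl
      (show 1 - u ≤ 1 + δd by linarith)
    linarith [this]
  have hNr : N ≤ a * (1 + u) ^ 3 := by
    rw [hN]
    have := prod_ub (le_trans (by positivity) hNcl) (show (0:ℝ) ≤ 1 + δd by linarith) hNcr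
      (show 1 + δd ≤ 1 + u by linarith)
    linarith [this]
  have hDl : S * (1 - u) ^ 3 ≤ D := by
    rw [hD]
    have := prod_lb (show (0:ℝ) ≤ S * (1 - u) ^ 2 by positivity) hu1.le htl
      (show 1 - u ≤ 1 + δb by linarith)
    linarith [this]
  have hDr : D ≤ S * (1 + u) ^ 3 := by
    rw [hD]
    have := prod_ub htpos.le hb1.le htr (show 1 + δb ≤ 1 + u by linarith)
    linarith [this]
  have hDpos : 0 < D := lt_of_lt_of_le (by positivity) hDl
  -- combine
  have hEr : N / D ≤ c * ((1 + u) ^ 3 / (1 - u) ^ 3) := by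
    rw [hcdef, div_mul_div_comm]
    exact div_le_div₀ (by positivity) hNr (by positivity) hDl
  have hEl : c * ((1 - u) ^ 3 / (1 + u) ^ 3) ≤ N / D := by
    rw [hcdef, div_mul_div_comm]
    exact div_le_div₀ (le_trans (by positivity) hNl) hNl hDpos hDr
  have hup : N / D ≤ c * (1 + 7 * u / (1 - 7 * u)) :=
    le_trans hEr (mul_le_mul_of_nonneg_left (q_upper u hu hu') hcpos.le)
  have hlo : c * (1 - 7 * u / (1 - 7 * u)) ≤ N / D :=
    le_trans (mul_le_mul_of_nonneg_left (q_lower u hu hu') hcpos.le) hEl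
  rw [abs_le]
  constructor
  · have hc1 : c * (1 - 7 * u / (1 - 7 * u)) = c - 7 * u / (1 - 7 * u) * c := by ring
    linarith [hlo, hc1.le, hc1.ge]
  · have hc2 : c * (1 + 7 * u / (1 - 7 * u)) = c + 7 * u / (1 - 7 * u) * c := by ring
    linarith [hup, hc2.le, hc2.ge]
end
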